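/- arXiv:2112.07809 — 4 statements merged into one kernel-verified Lean document; each statement's English description precedes it below -/
import Mathlib

section
/- Let ℓ be a natural number and let j_ℓ be the spherical Bessel function of the first kind. Then there exists a constant C > 0 such that for all x ≥ 1, |j_ℓ(x) − sin(x − ℓπ/2)/x| ≤ C/x². In particular, j_ℓ(x) behaves as sin(x − ℓπ/2)/x for large argument, up to an error of order 1/x². -/
open Real
open Polynomial

/-- Rayleigh's formula: `sphericalBessel ℓ x = (-x)^ℓ · ((1/x) d/dx)^ℓ (sin x / x)`,
the spherical Bessel function of the first kind of order `ℓ`. -/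
noncomputable def sphericalBessel (ℓ : ℕ) (x : ℝ) : ℝ :=
  (-x) ^ ℓ * ((fun f : ℝ → ℝ => fun y => deriv f y / y)^[ℓ] (fun y => Real.sin y / y)) x


noncomputable def scP : ℕ → Polynomial ℝ × Polynomial ℝ
  | 0 => (1, 0)
  | (n+1) =>
    let p := scP n
    (-p.2 - X ^ 2 * derivative p.1 - C ((n:ℝ)+1) * X * p.1,
      p.1 - X ^ 2 * derivative p.2 - C ((n:ℝ)+1) * X * p.2)

private lemma iter_eq (ℓ : ℕ) : ∀ x : ℝ, x ≠ 0 →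
    ((fun f : ℝ → ℝ => fun y => deriv f y / y)^[ℓ] (fun y => Real.sin y / y)) x
      = ((scP ℓ).1.eval x⁻¹ * Real.sin x + (scP ℓ).2.eval x⁻¹ * Real.cos x) / x ^ (ℓ+1) := by
  induction ℓ with
  | zero => intro x hx; simp [scP]
  | succ n IH =>
    intro x hx
    rw [Function.iterate_succ_apply']
    have hs : HasDerivAt (fun y : ℝ => (scP n).1.eval y⁻¹)
        ((derivative (scP n).1).eval x⁻¹ * -(x ^ 2)⁻¹) x :=
      ((scP n).1.hasDerivAt x⁻¹).comp x (hasDerivAt_inv hx)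
    have hc : HasDerivAt (fun y : ℝ => (scP n).2.eval y⁻¹)
        ((derivative (scP n).2).eval x⁻¹ * -(x ^ 2)⁻¹) x :=
      ((scP n).2.hasDerivAt x⁻¹).comp x (hasDerivAt_inv hx)
    have hnum : HasDerivAt
        (fun y : ℝ => (scP n).1.eval y⁻¹ * Real.sin y + (scP n).2.eval y⁻¹ * Real.cos y)
        (((derivative (scP n).1).eval x⁻¹ * -(x ^ 2)⁻¹) * Real.sin x
          + (scP n).1.eval x⁻¹ * Real.cos x
          + (((derivative (scP n).2).eval x⁻¹ * -(x ^ 2)⁻¹) * Real.cos x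
            + (scP n).2.eval x⁻¹ * -Real.sin x)) x :=
      (hs.mul (Real.hasDerivAt_sin x)).add (hc.mul (Real.hasDerivAt_cos x))
    have hF : HasDerivAt
        (fun y : ℝ => ((scP n).1.eval y⁻¹ * Real.sin y + (scP n).2.eval y⁻¹ * Real.cos y) / y ^ (n+1))
        (((((derivative (scP n).1).eval x⁻¹ * -(x ^ 2)⁻¹) * Real.sin x
          + (scP n).1.eval x⁻¹ * Real.cos x
          + (((derivative (scP n).2).eval x⁻¹ * -(x ^ 2)⁻¹) * Real.cos x
            + (scP n).2.eval x⁻¹ * -Real.sin x)) * x ^ (n+1)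
          - ((scP n).1.eval x⁻¹ * Real.sin x + (scP n).2.eval x⁻¹ * Real.cos x)
            * ((n+1 : ℕ) * x ^ n)) / (x ^ (n+1)) ^ 2) x :=
      hnum.div (hasDerivAt_pow (n+1) x) (pow_ne_zero _ hx)
    have hev : deriv ((fun f : ℝ → ℝ => fun y => deriv f y / y)^[n] (fun y => Real.sin y / y)) x
        = deriv (fun y : ℝ => ((scP n).1.eval y⁻¹ * Real.sin y + (scP n).2.eval y⁻¹ * Real.cos y) / y ^ (n+1)) x := by
      apply Filter.EventuallyEq.deriv_eq
      filter_upwards [isOpen_compl_singleton.mem_nhds (show x ∈ ({0}ᶜ : Set ℝ) from hx)] with y hy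
      exact IH y hy
    show deriv _ x / x = _
    rw [hev, hF.deriv]
    simp only [scP, Polynomial.eval_sub, Polynomial.eval_mul, Polynomial.eval_add,
      Polynomial.eval_neg, Polynomial.eval_pow, Polynomial.eval_X, Polynomial.eval_C,
      Polynomial.eval_one]
    push_cast
    field_simp
    ring

private lemma sc_const (ℓ : ℕ) : ∀ x : ℝ,
    (-1 : ℝ) ^ ℓ * ((scP ℓ).1.eval 0 * Real.sin x + (scP ℓ).2.eval 0 * Real.cos x)
      = Real.sin (x - ℓ * Real.pi / 2) := by
  induction ℓ with
  | zero => intro x; simp [scP]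
  | succ n IH =>
    intro x
    have h1 : (scP (n+1)).1.eval (0:ℝ) = -(scP n).2.eval 0 := by simp [scP]
    have h2 : (scP (n+1)).2.eval (0:ℝ) = (scP n).1.eval 0 := by simp [scP]
    have hx : x - (↑(n+1) : ℝ) * Real.pi / 2 = (x - Real.pi/2) - n * Real.pi / 2 := by
      push_cast; ring
    rw [h1, h2, hx, ← IH (x - Real.pi/2), Real.sin_sub_pi_div_two, Real.cos_sub_pi_div_two]
    ring

/-- Large-argument asymptotics: there is `C > 0` with
`|j_ℓ(x) − sin(x − ℓπ/2)/x| ≤ C/x²` for all `x ≥ 1`. -/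
theorem sphericalBessel_large_argument (ℓ : ℕ) :
    ∃ C : ℝ, 0 < C ∧ ∀ x : ℝ, 1 ≤ x →
      |sphericalBessel ℓ x - Real.sin (x - ℓ * Real.pi / 2) / x| ≤ C / x ^ 2 := by
  obtain ⟨M1, hM1⟩ := (isCompact_Icc (a := (0:ℝ)) (b := 1)).exists_bound_of_continuousOn
    ((scP ℓ).1.divX.continuous.continuousOn)
  obtain ⟨M2, hM2⟩ := (isCompact_Icc (a := (0:ℝ)) (b := 1)).exists_bound_of_continuousOn
    ((scP ℓ).2.divX.continuous.continuousOn)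
  have hM1' : 0 ≤ M1 := le_trans (norm_nonneg _) (hM1 0 (by norm_num))
  have hM2' : 0 ≤ M2 := le_trans (norm_nonneg _) (hM2 0 (by norm_num))
  refine ⟨M1 + M2 + 1, by positivity, fun x hx => ?_⟩
  have hx0 : (0:ℝ) < x := lt_of_lt_of_le one_pos hx
  have hxne : x ≠ 0 := ne_of_gt hx0
  have hu : x⁻¹ ∈ Set.Icc (0:ℝ) 1 := ⟨by positivity, inv_le_one_of_one_le₀ hx⟩
  -- rewrite sphericalBessel
  have key : sphericalBessel ℓ x - Real.sin (x - ℓ * Real.pi / 2) / x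
      = (-1:ℝ)^ℓ * x⁻¹ * (((scP ℓ).1.divX.eval x⁻¹) * Real.sin x
          + ((scP ℓ).2.divX.eval x⁻¹) * Real.cos x) / x := by
    have hdiv1 : (scP ℓ).1.eval x⁻¹ = x⁻¹ * (scP ℓ).1.divX.eval x⁻¹ + (scP ℓ).1.coeff 0 := by
      conv_lhs => rw [← (scP ℓ).1.X_mul_divX_add]
      simp only [Polynomial.eval_add, Polynomial.eval_mul, Polynomial.eval_X, Polynomial.eval_C]
    have hdiv2 : (scP ℓ).2.eval x⁻¹ = x⁻¹ * (scP ℓ).2.divX.eval x⁻¹ + (scP ℓ).2.coeff 0 := by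
      conv_lhs => rw [← (scP ℓ).2.X_mul_divX_add]
      simp only [Polynomial.eval_add, Polynomial.eval_mul, Polynomial.eval_X, Polynomial.eval_C]
    have hc1 : (scP ℓ).1.coeff 0 = (scP ℓ).1.eval (0:ℝ) :=
      Polynomial.coeff_zero_eq_eval_zero _
    have hc2 : (scP ℓ).2.coeff 0 = (scP ℓ).2.eval (0:ℝ) :=
      Polynomial.coeff_zero_eq_eval_zero _
    rw [sphericalBessel, iter_eq ℓ x hxne, hdiv1, hdiv2, hc1, hc2, ← sc_const ℓ x]
    have hpow : (-x) ^ ℓ = (-1:ℝ)^ℓ * x ^ ℓ := by rw [neg_pow]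
    rw [hpow]
    field_simp
    ring
  rw [key]
  rw [abs_div, abs_of_pos hx0]
  rw [div_le_div_iff₀ hx0 (by positivity)]
  have hb : |(-1:ℝ)^ℓ * x⁻¹ * (((scP ℓ).1.divX.eval x⁻¹) * Real.sin x
      + ((scP ℓ).2.divX.eval x⁻¹) * Real.cos x)| ≤ (M1 + M2) * x⁻¹ := by
    rw [abs_mul, abs_mul, abs_pow, abs_neg, abs_one, one_pow, one_mul,
      abs_of_pos (inv_pos.mpr hx0), mul_comm]
    gcongr
    calc |((scP ℓ).1.divX.eval x⁻¹) * Real.sin x + ((scP ℓ).2.divX.eval x⁻¹) * Real.cos x|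
        ≤ |((scP ℓ).1.divX.eval x⁻¹) * Real.sin x| + |((scP ℓ).2.divX.eval x⁻¹) * Real.cos x| :=
          abs_add_le _ _
      _ ≤ M1 * 1 + M2 * 1 := by
          rw [abs_mul, abs_mul]
          gcongr
          · exact hM1 x⁻¹ hu
          · exact Real.abs_sin_le_one x
          · exact hM2 x⁻¹ hu
          · exact Real.abs_cos_le_one x
      _ = M1 + M2 := by ring
  calc |(-1:ℝ)^ℓ * x⁻¹ * (((scP ℓ).1.divX.eval x⁻¹) * Real.sin x
      + ((scP ℓ).2.divX.eval x⁻¹) * Real.cos x)| * x ^ 2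
      ≤ (M1 + M2) * x⁻¹ * x ^ 2 := by gcongr
    _ = (M1 + M2) * x := by field_simp
    _ ≤ (M1 + M2 + 1) * x := by nlinarith
end

section
/- Let ℓ, ℓ' be natural numbers, r, r' > 0, and let n be an integer with n ≤ 0 and ℓ + ℓ' + n + 1 > 0. Then the function k ↦ k^n · j_ℓ(kr) · j_{ℓ'}(kr') is Lebesgue integrable on (0, ∞). -/
open Real

open MeasureTheory intervalIntegral


noncomputable def gAux (ℓ : ℕ) : ℝ → ℝ :=
  (fun f : ℝ → ℝ => fun y => deriv f y / y)^[ℓ] (fun y => Real.sin y / y)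

lemma gAux_succ (ℓ : ℕ) : gAux (ℓ+1) = fun y => deriv (gAux ℓ) y / y := by
  simp [gAux, Function.iterate_succ_apply']

noncomputable def HInt (ℓ : ℕ) (x : ℝ) : ℝ :=
  ∫ t in (-1:ℝ)..1, (1 - t^2)^ℓ * Real.cos (x * t)

lemma contF (ℓ : ℕ) (x : ℝ) : Continuous (fun t : ℝ => (1 - t^2)^ℓ * Real.cos (x * t)) := by
  fun_prop

lemma contF' (ℓ : ℕ) (x : ℝ) :
    Continuous (fun t : ℝ => (1 - t^2)^ℓ * (-Real.sin (x * t) * t)) := by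
  fun_prop

lemma hasDerivAt_HInt (ℓ : ℕ) (x : ℝ) :
    HasDerivAt (HInt ℓ) (∫ t in (-1:ℝ)..1, (1 - t^2)^ℓ * (-Real.sin (x * t) * t)) x := by
  have := intervalIntegral.hasDerivAt_integral_of_dominated_loc_of_deriv_le
    (F := fun (x : ℝ) (t : ℝ) => (1 - t^2)^ℓ * Real.cos (x * t))
    (F' := fun (x : ℝ) (t : ℝ) => (1 - t^2)^ℓ * (-Real.sin (x * t) * t))
    (x₀ := x) (a := -1) (b := 1) (bound := fun _ => 1) (μ := volume)
    (s := Set.univ) Filter.univ_mem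
    (Filter.Eventually.of_forall fun y => ((contF ℓ y).aestronglyMeasurable))
    ((contF ℓ x).intervalIntegrable _ _)
    ((contF' ℓ x).aestronglyMeasurable)
    ?_ (intervalIntegrable_const) ?_
  · exact this.2
  · refine Filter.Eventually.of_forall fun t ht y _ => ?_
    have ht' : t ∈ Set.Ioc (-1:ℝ) 1 := by
      simpa [Set.uIoc_of_le (by norm_num : (-1:ℝ) ≤ 1)] using ht
    have h1 : |1 - t^2| ≤ 1 := by
      rw [abs_le]
      constructor <;> nlinarith [ht'.1, ht'.2]
    have h2 : |t| ≤ 1 := abs_le.2 ⟨le_of_lt ht'.1, ht'.2⟩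
    have h3 : |1 - t^2|^ℓ ≤ 1 := pow_le_one₀ (abs_nonneg _) h1
    have h4 : |Real.sin (y * t)| ≤ 1 := Real.abs_sin_le_one _
    calc ‖(1 - t^2)^ℓ * (-Real.sin (y * t) * t)‖
        = |1 - t^2|^ℓ * (|Real.sin (y * t)| * |t|) := by
          simp [abs_mul, abs_pow]
      _ ≤ 1 := mul_le_one₀ h3 (mul_nonneg (abs_nonneg _) (abs_nonneg _))
          (mul_le_one₀ h4 (abs_nonneg _) h2)
  · refine Filter.Eventually.of_forall fun t _ y _ => ?_
    have h : HasDerivAt (fun y : ℝ => Real.cos (y * t)) (-Real.sin (y * t) * t) y := by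
      have := (Real.hasDerivAt_cos (y * t)).comp y ((hasDerivAt_id y).mul_const t)
      simpa [Function.comp_def] using this
    simpa using h.const_mul ((1 - t^2)^ℓ)

lemma parts (ℓ : ℕ) (x : ℝ) :
    (∫ t in (-1:ℝ)..1, Real.sin (x * t) * (t * (1 - t^2)^ℓ))
      = x / (2*(ℓ+1)) * HInt (ℓ+1) x := by
  have key := intervalIntegral.integral_mul_deriv_eq_deriv_mul
    (u := fun t : ℝ => Real.sin (x * t))
    (u' := fun t : ℝ => Real.cos (x * t) * x)
    (v := fun t : ℝ => -(1 - t^2)^(ℓ+1) / (2*(ℓ+1)))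
    (v' := fun t : ℝ => t * (1 - t^2)^ℓ)
    (a := -1) (b := 1) ?_ ?_ ?_ ?_
  · rw [key]
    simp only [one_pow, neg_one_sq]
    norm_num
    rw [HInt, ← intervalIntegral.integral_const_mul]
    rw [← intervalIntegral.integral_neg]
    apply intervalIntegral.integral_congr
    intro t _
    have h2 : (2*((ℓ:ℝ)+1)) ≠ 0 := by positivity
    field_simp
  · intro t _
    have := (Real.hasDerivAt_sin (x * t)).comp t ((hasDerivAt_id t).const_mul x)
    simpa [mul_comm, Function.comp_def] using this
  · intro t _
    have h1 : HasDerivAt (fun t : ℝ => 1 - t^2) (-(2*t)) t := by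
      exact ((hasDerivAt_const t (1:ℝ)).sub (hasDerivAt_pow 2 t)).congr_deriv (by norm_num)
    have h2 := ((h1.pow (ℓ+1)).neg).div_const (2*((ℓ:ℝ)+1))
    convert h2 using 1
    · rfl
    have : (2*((ℓ:ℝ)+1)) ≠ 0 := by positivity
    field_simp
    push_cast
    ring
  · exact (by fun_prop : Continuous fun t : ℝ => Real.cos (x*t) * x).intervalIntegrable _ _
  · exact (by fun_prop : Continuous fun t : ℝ => t * (1 - t^2)^ℓ).intervalIntegrable _ _

lemma gAux_eq_HInt (ℓ : ℕ) : ∀ x : ℝ, x ≠ 0 →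
    gAux ℓ x = ((-1)^ℓ / (2^(ℓ+1) * (Nat.factorial ℓ))) * HInt ℓ x := by
  induction ℓ with
  | zero =>
    intro x hx
    have : HInt 0 x = (2 * Real.sin x) / x := by
      rw [HInt]
      simp only [pow_zero, one_mul]
      rw [intervalIntegral.integral_comp_mul_left (fun t => Real.cos t) hx]
      simp [smul_eq_mul, Real.sin_neg]
      field_simp
      ring
    rw [this]
    simp [gAux]
    field_simp
  | succ ℓ ih =>
    intro x hx
    have hev : gAux ℓ =ᶠ[nhds x] fun y => ((-1)^ℓ / (2^(ℓ+1) * (Nat.factorial ℓ))) * HInt ℓ y := by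
      filter_upwards [IsOpen.mem_nhds isOpen_compl_singleton hx] with y hy
      exact ih y hy
    have hd : deriv (gAux ℓ) x
        = ((-1)^ℓ / (2^(ℓ+1) * (Nat.factorial ℓ))) * (∫ t in (-1:ℝ)..1, (1 - t^2)^ℓ * (-Real.sin (x * t) * t)) := by
      rw [hev.deriv_eq]
      exact ((hasDerivAt_HInt ℓ x).const_mul _).deriv
    have hint : (∫ t in (-1:ℝ)..1, (1 - t^2)^ℓ * (-Real.sin (x * t) * t))
        = -(x / (2*(ℓ+1)) * HInt (ℓ+1) x) := by
      rw [← parts ℓ x, ← intervalIntegral.integral_neg]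
      apply intervalIntegral.integral_congr
      intro t _
      ring
    rw [gAux_succ]
    simp only
    rw [hd, hint]
    rw [Nat.factorial_succ]
    push_cast
    have h1 : (Nat.factorial ℓ : ℝ) ≠ 0 := by exact_mod_cast (Nat.factorial_pos ℓ).ne'
    field_simp
    ring


lemma sphericalBessel_eq (ℓ : ℕ) (x : ℝ) : sphericalBessel ℓ x = (-x)^ℓ * gAux ℓ x := rfl

lemma abs_HInt_le (ℓ : ℕ) (x : ℝ) : |HInt ℓ x| ≤ 2 := by
  have := intervalIntegral.norm_integral_le_of_norm_le_const
    (a := -1) (b := 1) (C := 1) (f := fun t : ℝ => (1 - t^2)^ℓ * Real.cos (x * t)) ?_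
  · rw [HInt]
    calc |∫ t in (-1:ℝ)..1, (1 - t^2)^ℓ * Real.cos (x * t)| ≤ 1 * |1 - (-1:ℝ)| := this
      _ = 2 := by norm_num
  · intro t ht
    have ht' : t ∈ Set.Ioc (-1:ℝ) 1 := by
      simpa [Set.uIoc_of_le (by norm_num : (-1:ℝ) ≤ 1)] using ht
    have h1 : |1 - t^2| ≤ 1 := by
      rw [abs_le]; constructor <;> nlinarith [ht'.1, ht'.2]
    have h3 : |1 - t^2|^ℓ ≤ 1 := pow_le_one₀ (abs_nonneg _) h1
    calc ‖(1 - t^2)^ℓ * Real.cos (x * t)‖ = |1 - t^2|^ℓ * |Real.cos (x * t)| := by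
          simp [abs_mul, abs_pow]
      _ ≤ 1 := mul_le_one₀ h3 (abs_nonneg _) (Real.abs_cos_le_one _)

lemma abs_gAux_le_one (ℓ : ℕ) {x : ℝ} (hx : x ≠ 0) : |gAux ℓ x| ≤ 1 := by
  rw [gAux_eq_HInt ℓ x hx, abs_mul]
  have hfac : (1:ℝ) ≤ (Nat.factorial ℓ : ℝ) := by exact_mod_cast (Nat.factorial_pos ℓ)
  have hpow : (2:ℝ) ≤ 2^(ℓ+1) := by
    calc (2:ℝ) = 2^1 := (pow_one 2).symm
      _ ≤ 2^(ℓ+1) := pow_le_pow_right₀ one_le_two (by omega)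
  have h1 : |(-1:ℝ)^ℓ / (2^(ℓ+1) * (Nat.factorial ℓ))| = 1 / (2^(ℓ+1) * (Nat.factorial ℓ)) := by
    rw [abs_div, abs_pow, abs_neg, abs_one, one_pow]
    congr 1
    rw [abs_of_pos]
    positivity
  rw [h1]
  have h2 : (2:ℝ) ≤ 2^(ℓ+1) * (Nat.factorial ℓ) := by nlinarith
  calc 1 / ((2:ℝ)^(ℓ+1) * (Nat.factorial ℓ)) * |HInt ℓ x| ≤ 1/2 * 2 := by
        gcongr
        exact abs_HInt_le ℓ x
    _ = 1 := by norm_num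

lemma abs_sphericalBessel_le_pow (ℓ : ℕ) {x : ℝ} (hx : 0 < x) :
    |sphericalBessel ℓ x| ≤ x ^ ℓ := by
  rw [sphericalBessel_eq, abs_mul, abs_pow, abs_neg, abs_of_pos hx]
  calc x^ℓ * |gAux ℓ x| ≤ x^ℓ * 1 := by
        gcongr
        exact abs_gAux_le_one ℓ hx.ne'
    _ = x^ℓ := mul_one _

open Polynomial in
lemma gAux_poly (ℓ : ℕ) : ∃ A B : Polynomial ℝ, A.natDegree ≤ ℓ ∧ B.natDegree ≤ ℓ ∧
    ∀ x : ℝ, x ≠ 0 →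
      gAux ℓ x = (A.eval x * Real.sin x + B.eval x * Real.cos x) / x^(2*ℓ+1) := by
  induction ℓ with
  | zero =>
    refine ⟨1, 0, by simp, by simp, fun x hx => ?_⟩
    simp [gAux]
  | succ ℓ ih =>
    obtain ⟨A, B, hA, hB, hrep⟩ := ih
    refine ⟨X * (derivative A - B) - C ((2*ℓ+1 : ℕ) : ℝ) * A,
            X * (A + derivative B) - C ((2*ℓ+1 : ℕ) : ℝ) * B, ?_, ?_, ?_⟩
    · refine le_trans (natDegree_sub_le _ _) (max_le ?_ ?_)
      · refine le_trans (natDegree_mul_le) ?_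
        have := natDegree_sub_le (derivative A) B
        have hdA : (derivative A).natDegree ≤ ℓ := le_trans (natDegree_derivative_le A) (by omega)
        simp only [natDegree_X]
        omega
      · exact le_trans (natDegree_C_mul_le _ _) (by omega)
    · refine le_trans (natDegree_sub_le _ _) (max_le ?_ ?_)
      · refine le_trans (natDegree_mul_le) ?_
        have := natDegree_add_le A (derivative B)
        have hdB : (derivative B).natDegree ≤ ℓ := le_trans (natDegree_derivative_le B) (by omega)
        simp only [natDegree_X]
        omega
      · exact le_trans (natDegree_C_mul_le _ _) (by omega)
    · intro x hx
      have hev : gAux ℓ =ᶠ[nhds x]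
          fun y => (A.eval y * Real.sin y + B.eval y * Real.cos y) / y^(2*ℓ+1) := by
        filter_upwards [IsOpen.mem_nhds isOpen_compl_singleton hx] with y hy
        exact hrep y hy
      have hN : HasDerivAt (fun y => A.eval y * Real.sin y + B.eval y * Real.cos y)
          ((derivative A).eval x * Real.sin x + A.eval x * Real.cos x
            + ((derivative B).eval x * Real.cos x + B.eval x * (-Real.sin x))) x := by
        exact ((A.hasDerivAt x).mul (Real.hasDerivAt_sin x)).add
          ((B.hasDerivAt x).mul (Real.hasDerivAt_cos x))
      have hD : HasDerivAt (fun y : ℝ => y^(2*ℓ+1)) ((2*ℓ+1 : ℕ) * x^(2*ℓ)) x := by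
        simpa using hasDerivAt_pow (2*ℓ+1) x
      have hφ := hN.div hD (pow_ne_zero _ hx)
      have hderiv : deriv (gAux ℓ) x = _ := hev.deriv_eq.trans hφ.deriv
      rw [gAux_succ]
      simp only
      rw [hderiv]
      have hx1 : x^(2*ℓ+1) ≠ 0 := pow_ne_zero _ hx
      have hx2 : x^(2*(ℓ+1)+1) ≠ 0 := pow_ne_zero _ hx
      simp only [eval_sub, eval_mul, eval_add, eval_X, eval_C]
      field_simp
      ring

lemma poly_eval_bound (p : Polynomial ℝ) (d : ℕ) (hd : p.natDegree ≤ d) :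
    ∃ C : ℝ, 0 ≤ C ∧ ∀ x : ℝ, 1 ≤ x → |p.eval x| ≤ C * x^d := by
  refine ⟨∑ i ∈ Finset.range (d+1), |p.coeff i|, Finset.sum_nonneg fun _ _ => abs_nonneg _,
    fun x hx => ?_⟩
  have hx0 : (0:ℝ) < x := lt_of_lt_of_le one_pos hx
  rw [Polynomial.eval_eq_sum_range' (lt_of_le_of_lt hd (Nat.lt_succ_self d))]
  calc |∑ i ∈ Finset.range (d+1), p.coeff i * x^i|
      ≤ ∑ i ∈ Finset.range (d+1), |p.coeff i * x^i| := Finset.abs_sum_le_sum_abs _ _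
    _ ≤ ∑ i ∈ Finset.range (d+1), |p.coeff i| * x^d := by
        apply Finset.sum_le_sum
        intro i hi
        rw [abs_mul, abs_pow, abs_of_pos hx0]
        have hxi : x^i ≤ x^d :=
          pow_le_pow_right₀ hx (Nat.lt_succ_iff.mp (Finset.mem_range.mp hi))
        exact mul_le_mul_of_nonneg_left hxi (abs_nonneg _)
    _ = (∑ i ∈ Finset.range (d+1), |p.coeff i|) * x^d := (Finset.sum_mul _ _ _).symm

lemma sb_decay (ℓ : ℕ) : ∃ C : ℝ, 0 ≤ C ∧ ∀ x : ℝ, 1 ≤ x →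
    |sphericalBessel ℓ x| ≤ C / x := by
  obtain ⟨A, B, hA, hB, hrep⟩ := gAux_poly ℓ
  obtain ⟨CA, hCA0, hCA⟩ := poly_eval_bound A ℓ hA
  obtain ⟨CB, hCB0, hCB⟩ := poly_eval_bound B ℓ hB
  refine ⟨CA + CB, by linarith, fun x hx => ?_⟩
  have hx0 : (0:ℝ) < x := lt_of_lt_of_le one_pos hx
  rw [sphericalBessel_eq, abs_mul, abs_pow, abs_neg, abs_of_pos hx0,
    hrep x hx0.ne']
  rw [abs_div, abs_pow, abs_of_pos hx0]
  have hnum : |A.eval x * Real.sin x + B.eval x * Real.cos x| ≤ (CA + CB) * x^ℓ := by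
    calc |A.eval x * Real.sin x + B.eval x * Real.cos x|
        ≤ |A.eval x| * |Real.sin x| + |B.eval x| * |Real.cos x| := by
          refine le_trans (abs_add_le _ _) ?_
          rw [abs_mul, abs_mul]
      _ ≤ CA * x^ℓ * 1 + CB * x^ℓ * 1 := by
          gcongr
          exacts [hCA x hx, Real.abs_sin_le_one x, hCB x hx, Real.abs_cos_le_one x]
      _ = (CA + CB) * x^ℓ := by ring
  calc x^ℓ * (|A.eval x * Real.sin x + B.eval x * Real.cos x| / x^(2*ℓ+1))
      ≤ x^ℓ * (((CA + CB) * x^ℓ) / x^(2*ℓ+1)) := by gcongr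
    _ = (CA + CB) / x := by
        rw [eq_div_iff hx0.ne']
        field_simp
        ring

lemma measurable_gAux (ℓ : ℕ) : Measurable (gAux ℓ) := by
  induction ℓ with
  | zero => exact Real.measurable_sin.div measurable_id
  | succ ℓ ih =>
    rw [gAux_succ]
    exact (measurable_deriv _).div measurable_id

lemma measurable_sb (ℓ : ℕ) : Measurable (sphericalBessel ℓ) := by
  have : sphericalBessel ℓ = fun x => (-x)^ℓ * gAux ℓ x := rfl
  rw [this]
  exact (measurable_id.neg.pow_const ℓ).mul (measurable_gAux ℓ)

/-- For `n ≤ 0` an integer with `ℓ + ℓ' + n + 1 > 0` and `r, r' > 0`, the function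
`k ↦ k^n j_ℓ(kr) j_{ℓ'}(kr')` is Lebesgue integrable on `(0, ∞)`. -/
theorem doubleSBF_integrable (ℓ ℓ' : ℕ) (n : ℤ) (hn : n ≤ 0)
    (hconv : 0 < (ℓ : ℤ) + ℓ' + n + 1) (r r' : ℝ) (hr : 0 < r) (hr' : 0 < r') :
    MeasureTheory.IntegrableOn
      (fun k : ℝ => k ^ n * sphericalBessel ℓ (k * r) * sphericalBessel ℓ' (k * r'))
      (Set.Ioi 0) := by
  obtain ⟨m, hm⟩ : ∃ m : ℕ, n = -(m : ℤ) := ⟨n.natAbs, by omega⟩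
  have hmeas : Measurable (fun k : ℝ =>
      k ^ n * sphericalBessel ℓ (k * r) * sphericalBessel ℓ' (k * r')) := by
    have h1 : Measurable (fun k : ℝ => k ^ n) := by
      have : (fun k : ℝ => k ^ n) = fun k => (k ^ m)⁻¹ := by
        funext k; rw [hm, zpow_neg, zpow_natCast]
      rw [this]
      exact (measurable_id.pow_const m).inv
    exact (h1.mul ((measurable_sb ℓ).comp (measurable_id.mul_const r))).mul
      ((measurable_sb ℓ').comp (measurable_id.mul_const r'))
  set T : ℝ := max 1 (max r⁻¹ r'⁻¹) with hT
  have hT1 : (1:ℝ) ≤ T := le_max_left _ _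
  have hT0 : (0:ℝ) < T := lt_of_lt_of_le one_pos hT1
  have hsplit : Set.Ioi (0:ℝ) = Set.Ioc 0 T ∪ Set.Ioi T :=
    (Set.Ioc_union_Ioi_eq_Ioi hT0.le).symm
  rw [hsplit]
  apply MeasureTheory.IntegrableOn.union
  · -- near zero
    have hmaj : MeasureTheory.IntegrableOn
        (fun k : ℝ => (r^ℓ * r'^ℓ') * k ^ ((ℓ : ℝ) + ℓ' + n)) (Set.Ioc 0 T) := by
      apply MeasureTheory.Integrable.const_mul
      have hgt : (-1 : ℝ) < (ℓ:ℝ) + ℓ' + n := by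
        have h' : (-1 : ℤ) < (ℓ:ℤ) + ℓ' + n := by omega
        exact_mod_cast h'
      apply MeasureTheory.IntegrableOn.mono_set
        ((integrableOn_Ioo_rpow_iff (t := T+1) (by linarith)).2 hgt)
      exact fun x hx => ⟨hx.1, lt_of_le_of_lt hx.2 (by linarith)⟩
    apply MeasureTheory.Integrable.mono' hmaj
      (hmeas.aestronglyMeasurable.restrict)
    · filter_upwards [MeasureTheory.ae_restrict_mem measurableSet_Ioc] with k hk
      have hk0 : 0 < k := hk.1
      have h1 : |sphericalBessel ℓ (k*r)| ≤ (k*r)^ℓ :=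
        abs_sphericalBessel_le_pow ℓ (by positivity)
      have h2 : |sphericalBessel ℓ' (k*r')| ≤ (k*r')^ℓ' :=
        abs_sphericalBessel_le_pow ℓ' (by positivity)
      have hkn : |k ^ n| = k ^ n := abs_of_pos (zpow_pos hk0 n)
      rw [Real.norm_eq_abs, abs_mul, abs_mul, hkn]
      have hre : k ^ n * (k*r)^ℓ * (k*r')^ℓ' = (r^ℓ * r'^ℓ') * k ^ ((ℓ : ℝ) + ℓ' + n) := by
        rw [mul_pow, mul_pow]
        have : k ^ ((ℓ : ℝ) + ℓ' + n) = k^ℓ * k^ℓ' * k^n := by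
          rw [Real.rpow_add hk0, Real.rpow_add hk0, Real.rpow_natCast, Real.rpow_natCast,
            Real.rpow_intCast]
        rw [this]; ring
      calc k ^ n * |sphericalBessel ℓ (k*r)| * |sphericalBessel ℓ' (k*r')|
          ≤ k ^ n * (k*r)^ℓ * (k*r')^ℓ' := by
            have hzp := zpow_pos hk0 n
            gcongr
            all_goals first | exact h1 | exact h2 | positivity
        _ = (r^ℓ * r'^ℓ') * k ^ ((ℓ : ℝ) + ℓ' + n) := hre
  · -- near infinity
    obtain ⟨C, hC0, hC⟩ := sb_decay ℓ
    obtain ⟨C', hC'0, hC'⟩ := sb_decay ℓ'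
    have hmaj : MeasureTheory.IntegrableOn
        (fun k : ℝ => (C * C' / (r * r')) * k ^ ((-2 : ℝ))) (Set.Ioi T) := by
      exact (integrableOn_Ioi_rpow_of_lt (by norm_num) hT0).const_mul _
    apply MeasureTheory.Integrable.mono' hmaj (hmeas.aestronglyMeasurable.restrict)
    filter_upwards [MeasureTheory.ae_restrict_mem measurableSet_Ioi] with k hk
    have hk1 : (1:ℝ) ≤ k := le_trans hT1 (le_of_lt hk)
    have hk0 : (0:ℝ) < k := lt_of_lt_of_le one_pos hk1
    have hkr : (1:ℝ) ≤ k * r := by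
      have h : r⁻¹ ≤ T := le_trans (le_max_left _ _) (le_max_right _ _)
      calc (1:ℝ) = r⁻¹ * r := by field_simp
        _ ≤ k * r := by gcongr; exact le_trans h hk.le
    have hkr' : (1:ℝ) ≤ k * r' := by
      have h : r'⁻¹ ≤ T := le_trans (le_max_right _ _) (le_max_right _ _)
      calc (1:ℝ) = r'⁻¹ * r' := by field_simp
        _ ≤ k * r' := by gcongr; exact le_trans h hk.le
    have hkn : k ^ n ≤ 1 := zpow_le_one_of_nonpos₀ hk1 hn
    have hknpos : 0 < k ^ n := zpow_pos hk0 n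
    rw [Real.norm_eq_abs, abs_mul, abs_mul, abs_of_pos hknpos]
    calc k ^ n * |sphericalBessel ℓ (k*r)| * |sphericalBessel ℓ' (k*r')|
        ≤ 1 * (C / (k*r)) * (C' / (k*r')) := by
          have e1 : k ^ n * |sphericalBessel ℓ (k*r)| ≤ 1 * (C / (k*r)) :=
            mul_le_mul hkn (hC _ hkr) (abs_nonneg _) one_pos.le
          exact mul_le_mul e1 (hC' _ hkr') (abs_nonneg _) (by positivity)
      _ = (C * C' / (r * r')) * k ^ ((-2 : ℝ)) := by
          rw [Real.rpow_neg hk0.le]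
          rw [show ((2:ℝ)) = ((2:ℕ):ℝ) by norm_num, Real.rpow_natCast]
          field_simp
end

section
/- Let ℓ, ℓ' be natural numbers and n an integer with n ≤ −2 and ℓ + ℓ' + n + 1 > 0, and fix r' > 0. Then the function I(r) = ∫₀^∞ k^n j_ℓ(kr) j_{ℓ'}(kr') dk is twice differentiable on (0, ∞), and for every r > 0, −[I''(r) + (2/r)·I'(r) − (ℓ(ℓ+1)/r²)·I(r)] = ∫₀^∞ k^{n+2} j_ℓ(kr) j_{ℓ'}(kr') dk. That is, applying the operator D̂_{ℓ,r} = −[∂²/∂r² + (2/r)∂/∂r − ℓ(ℓ+1)/r²] to the double spherical-Bessel overlap integral raises the power-law weight by two. -/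
open Real

open MeasureTheory intervalIntegral Set

lemma hasDerivAt_of_eq' {f : ℝ → ℝ} {f' g' x : ℝ} (h : HasDerivAt f f' x) (e : g' = f') :
    HasDerivAt f g' x := e ▸ h

/-- `Gb ℓ x = ∫₀¹ (1-t²)^ℓ cos(xt) dt`, the Poisson integral for spherical Bessel functions. -/
noncomputable def Gb (ℓ : ℕ) (x : ℝ) : ℝ := ∫ t in (0:ℝ)..1, (1 - t^2)^ℓ * Real.cos (x*t)

/-- `Hb ℓ x = ∫₀¹ t (1-t²)^ℓ sin(xt) dt`. -/
noncomputable def Hb (ℓ : ℕ) (x : ℝ) : ℝ := ∫ t in (0:ℝ)..1, t * (1 - t^2)^ℓ * Real.sin (x*t)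

lemma contG (ℓ : ℕ) (x : ℝ) : Continuous fun t : ℝ => (1 - t^2)^ℓ * Real.cos (x*t) := by
  fun_prop

lemma contH (ℓ : ℕ) (x : ℝ) : Continuous fun t : ℝ => t * (1 - t^2)^ℓ * Real.sin (x*t) := by
  fun_prop

lemma abs_Gb_le_one (ℓ : ℕ) (x : ℝ) : |Gb ℓ x| ≤ 1 := by
  have h : ∀ t ∈ Set.uIcc (0:ℝ) 1, ‖(1 - t^2)^ℓ * Real.cos (x*t)‖ ≤ 1 := by
    intro t ht
    rw [Set.uIcc_of_le (by norm_num)] at ht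
    obtain ⟨h0, h1⟩ := ht
    have h2 : |(1 - t^2)^ℓ| ≤ 1 := by
      rw [abs_pow]
      apply pow_le_one₀ (abs_nonneg _)
      rw [abs_le]; constructor <;> nlinarith
    calc ‖(1 - t^2)^ℓ * Real.cos (x*t)‖ = |(1 - t^2)^ℓ| * |Real.cos (x*t)| := abs_mul _ _
    _ ≤ 1 * 1 := mul_le_mul h2 (Real.abs_cos_le_one _) (abs_nonneg _) (by norm_num)
    _ = 1 := one_mul 1
  have := intervalIntegral.norm_integral_le_of_norm_le_const (C := 1)
    (f := fun t : ℝ => (1 - t^2)^ℓ * Real.cos (x*t)) (a := 0) (b := 1) (fun t ht => by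
      apply h
      rw [Set.uIoc_of_le (by norm_num : (0:ℝ) ≤ 1)] at ht
      rw [Set.uIcc_of_le (by norm_num : (0:ℝ) ≤ 1)]
      exact ⟨ht.1.le, ht.2⟩)
  simpa [Gb] using this

lemma hasDerivAt_Gb (ℓ : ℕ) (x : ℝ) : HasDerivAt (Gb ℓ) (-(Hb ℓ x)) x := by
  have key := intervalIntegral.hasDerivAt_integral_of_dominated_loc_of_deriv_le
    (F := fun y t => (1 - t^2)^ℓ * Real.cos (y*t))
    (F' := fun y t => -(t * (1 - t^2)^ℓ * Real.sin (y*t)))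
    (x₀ := x) (s := Metric.ball x 1) (a := 0) (b := 1) (bound := fun _ => 1) (μ := volume)
    (Metric.ball_mem_nhds x one_pos)
    (Filter.Eventually.of_forall fun y => (contG ℓ y).aestronglyMeasurable)
    ((contG ℓ x).intervalIntegrable 0 1)
    ((contH ℓ x).neg.aestronglyMeasurable)
    (Filter.Eventually.of_forall fun t ht y _ => by
      rw [Set.uIoc_of_le (by norm_num : (0:ℝ) ≤ 1)] at ht
      have h2 : |(1 - t^2)^ℓ| ≤ 1 := by
        rw [abs_pow]
        apply pow_le_one₀ (abs_nonneg _)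
        rw [abs_le]; constructor <;> nlinarith [ht.1.le, ht.2]
      have h3 : |t| ≤ 1 := by rw [abs_le]; exact ⟨by linarith [ht.1.le], ht.2⟩
      calc ‖-(t * (1 - t^2)^ℓ * Real.sin (y*t))‖
          = |t| * |(1 - t^2)^ℓ| * |Real.sin (y*t)| := by
            rw [norm_neg]; rw [Real.norm_eq_abs, abs_mul, abs_mul]
        _ ≤ 1 * 1 * 1 := by
            exact mul_le_mul (mul_le_mul h3 h2 (abs_nonneg _) zero_le_one)
              (Real.abs_sin_le_one _) (abs_nonneg _) (by norm_num)
        _ = 1 := by norm_num)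
    (intervalIntegrable_const)
    (Filter.Eventually.of_forall fun t _ y _ => by
      have : HasDerivAt (fun y : ℝ => y * t) t y := by
        simpa using (hasDerivAt_id y).mul_const t
      have h := ((Real.hasDerivAt_cos (y*t)).comp y this).const_mul ((1 - t^2)^ℓ)
      refine hasDerivAt_of_eq' h ?_
      ring)
  have h2 := key.2
  have : (∫ t in (0:ℝ)..1, -(t * (1 - t^2)^ℓ * Real.sin (x*t))) = -(Hb ℓ x) := by
    rw [intervalIntegral.integral_neg]; rfl
  rw [this] at h2
  exact h2

lemma hasDerivAt_Hb (ℓ : ℕ) (x : ℝ) : HasDerivAt (Hb ℓ) (Gb ℓ x - Gb (ℓ+1) x) x := by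
  have key := intervalIntegral.hasDerivAt_integral_of_dominated_loc_of_deriv_le
    (F := fun y t => t * (1 - t^2)^ℓ * Real.sin (y*t))
    (F' := fun y t => t^2 * (1 - t^2)^ℓ * Real.cos (y*t))
    (x₀ := x) (s := Metric.ball x 1) (a := 0) (b := 1) (bound := fun _ => 1) (μ := volume)
    (Metric.ball_mem_nhds x one_pos)
    (Filter.Eventually.of_forall fun y => (contH ℓ y).aestronglyMeasurable)
    ((contH ℓ x).intervalIntegrable 0 1)
    ((by fun_prop : Continuous fun t : ℝ => t^2 * (1 - t^2)^ℓ * Real.cos (x*t)).aestronglyMeasurable)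
    (Filter.Eventually.of_forall fun t ht y _ => by
      rw [Set.uIoc_of_le (by norm_num : (0:ℝ) ≤ 1)] at ht
      have h2 : |(1 - t^2)^ℓ| ≤ 1 := by
        rw [abs_pow]
        apply pow_le_one₀ (abs_nonneg _)
        rw [abs_le]; constructor <;> nlinarith [ht.1.le, ht.2]
      have h3 : |t^2| ≤ 1 := by
        rw [abs_le]; constructor <;> nlinarith [ht.1.le, ht.2]
      calc ‖t^2 * (1 - t^2)^ℓ * Real.cos (y*t)‖
          = |t^2| * |(1 - t^2)^ℓ| * |Real.cos (y*t)| := by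
            rw [Real.norm_eq_abs, abs_mul, abs_mul]
        _ ≤ 1 * 1 * 1 := by
            exact mul_le_mul (mul_le_mul h3 h2 (abs_nonneg _) zero_le_one)
              (Real.abs_cos_le_one _) (abs_nonneg _) (by norm_num)
        _ = 1 := by norm_num)
    (intervalIntegrable_const)
    (Filter.Eventually.of_forall fun t _ y _ => by
      have : HasDerivAt (fun y : ℝ => y * t) t y := by
        simpa using (hasDerivAt_id y).mul_const t
      have h := ((Real.hasDerivAt_sin (y*t)).comp y this).const_mul (t * (1 - t^2)^ℓ)
      refine hasDerivAt_of_eq' h ?_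
      ring)
  have h2 := key.2
  have : (∫ t in (0:ℝ)..1, t^2 * (1 - t^2)^ℓ * Real.cos (x*t)) = Gb ℓ x - Gb (ℓ+1) x := by
    rw [Gb, Gb, ← intervalIntegral.integral_sub ((contG ℓ x).intervalIntegrable 0 1)
      ((contG (ℓ+1) x).intervalIntegrable 0 1)]
    apply intervalIntegral.integral_congr
    intro t _
    ring
  rw [this] at h2
  exact h2

-- section 2
lemma Hb_eq (ℓ : ℕ) (x : ℝ) : Hb ℓ x = x / (2*(ℓ+1)) * Gb (ℓ+1) x := by
  have hv : ∀ t ∈ Set.uIcc (0:ℝ) 1,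
      HasDerivAt (fun t : ℝ => -((1 - t^2)^(ℓ+1) / (2*(ℓ+1)))) (t * (1 - t^2)^ℓ) t := by
    intro t _
    have hb : HasDerivAt (fun t : ℝ => 1 - t^2) (-(2*t)) t := by
      simpa using ((hasDerivAt_pow 2 t).const_sub 1)
    have h := ((hb.pow (ℓ+1)).div_const (2*(ℓ+1))).neg
    refine hasDerivAt_of_eq' h ?_
    have : ((ℓ:ℝ)+1) ≠ 0 := by positivity
    push_cast [Nat.add_sub_cancel]
    field_simp
  have hu : ∀ t ∈ Set.uIcc (0:ℝ) 1,
      HasDerivAt (fun t : ℝ => Real.sin (x*t)) (x * Real.cos (x*t)) t := by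
    intro t _
    have : HasDerivAt (fun t : ℝ => x * t) x t := by simpa using (hasDerivAt_id t).const_mul x
    exact hasDerivAt_of_eq' ((Real.hasDerivAt_sin (x*t)).comp t this) (mul_comm _ _)
  have ibp := intervalIntegral.integral_mul_deriv_eq_deriv_mul hu hv
    ((by fun_prop : Continuous fun t : ℝ => x * Real.cos (x*t)).intervalIntegrable 0 1)
    ((by fun_prop : Continuous fun t : ℝ => t * (1 - t^2)^ℓ).intervalIntegrable 0 1)
  have hL : (∫ t in (0:ℝ)..1, Real.sin (x*t) * (t * (1 - t^2)^ℓ)) = Hb ℓ x := by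
    rw [Hb]; apply intervalIntegral.integral_congr; intro t _; ring
  have hR : (∫ t in (0:ℝ)..1, x * Real.cos (x*t) * -((1 - t^2)^(ℓ+1) / (2*(ℓ+1))))
      = -(x / (2*(ℓ+1))) * Gb (ℓ+1) x := by
    rw [Gb, ← intervalIntegral.integral_const_mul]
    apply intervalIntegral.integral_congr; intro t _
    have : ((ℓ:ℝ)+1) ≠ 0 := by positivity
    field_simp
  rw [hL, hR] at ibp
  rw [ibp]
  norm_num

lemma x_mul_Hb_zero (x : ℝ) : x * Hb 0 x = Gb 0 x - Real.cos x := by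
  have hu : ∀ t ∈ Set.uIcc (0:ℝ) 1, HasDerivAt (fun t : ℝ => t) 1 t := fun t _ => hasDerivAt_id t
  have hv : ∀ t ∈ Set.uIcc (0:ℝ) 1,
      HasDerivAt (fun t : ℝ => -Real.cos (x*t)) (x * Real.sin (x*t)) t := by
    intro t _
    have : HasDerivAt (fun t : ℝ => x * t) x t := by simpa using (hasDerivAt_id t).const_mul x
    have := ((Real.hasDerivAt_cos (x*t)).comp t this).neg
    refine hasDerivAt_of_eq' this ?_; ring
  have ibp := intervalIntegral.integral_mul_deriv_eq_deriv_mul hu hv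
    (intervalIntegrable_const)
    ((by fun_prop : Continuous fun t : ℝ => x * Real.sin (x*t)).intervalIntegrable 0 1)
  have hL : (∫ t in (0:ℝ)..1, t * (x * Real.sin (x*t))) = x * Hb 0 x := by
    rw [Hb, ← intervalIntegral.integral_const_mul]
    apply intervalIntegral.integral_congr; intro t _; ring
  have hR : (∫ t in (0:ℝ)..1, 1 * -Real.cos (x*t)) = -Gb 0 x := by
    rw [Gb, ← intervalIntegral.integral_neg]
    apply intervalIntegral.integral_congr; intro t _; ring
  rw [hL, hR] at ibp
  rw [ibp]; ring

lemma x_mul_Hb_succ (m : ℕ) (x : ℝ) :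
    x * Hb (m+1) x = (2*m+3) * Gb (m+1) x - (2*m+2) * Gb m x := by
  have hu : ∀ t ∈ Set.uIcc (0:ℝ) 1,
      HasDerivAt (fun t : ℝ => t * (1 - t^2)^(m+1))
        ((1 - t^2)^(m+1) + t * (((m:ℝ)+1) * (1 - t^2)^m * (-(2*t)))) t := by
    intro t _
    have hb : HasDerivAt (fun t : ℝ => 1 - t^2) (-(2*t)) t := by
      simpa using ((hasDerivAt_pow 2 t).const_sub 1)
    have h := (hasDerivAt_id t).mul (hb.pow (m+1))
    refine hasDerivAt_of_eq' h ?_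
    simp only [id_eq, Pi.pow_apply, Nat.add_sub_cancel]
    push_cast
    ring
  have hv : ∀ t ∈ Set.uIcc (0:ℝ) 1,
      HasDerivAt (fun t : ℝ => -Real.cos (x*t)) (x * Real.sin (x*t)) t := by
    intro t _
    have : HasDerivAt (fun t : ℝ => x * t) x t := by simpa using (hasDerivAt_id t).const_mul x
    have := ((Real.hasDerivAt_cos (x*t)).comp t this).neg
    refine hasDerivAt_of_eq' this ?_; ring
  have ibp := intervalIntegral.integral_mul_deriv_eq_deriv_mul hu hv
    ((by fun_prop : Continuous fun t : ℝ =>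
      (1 - t^2)^(m+1) + t * (((m:ℝ)+1) * (1 - t^2)^m * (-(2*t)))).intervalIntegrable 0 1)
    ((by fun_prop : Continuous fun t : ℝ => x * Real.sin (x*t)).intervalIntegrable 0 1)
  have hL : (∫ t in (0:ℝ)..1, t * (1 - t^2)^(m+1) * (x * Real.sin (x*t))) = x * Hb (m+1) x := by
    rw [Hb, ← intervalIntegral.integral_const_mul]
    apply intervalIntegral.integral_congr; intro t _; ring
  have hR : (∫ t in (0:ℝ)..1,
      ((1 - t^2)^(m+1) + t * (((m:ℝ)+1) * (1 - t^2)^m * (-(2*t)))) * -Real.cos (x*t))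
      = -((2*m+3) * Gb (m+1) x - (2*m+2) * Gb m x) := by
    have h1 : -((2*(m:ℝ)+3) * Gb (m+1) x - (2*m+2) * Gb m x)
        = (2*m+2) * Gb m x - (2*m+3) * Gb (m+1) x := by ring
    rw [h1, Gb, Gb, ← intervalIntegral.integral_const_mul, ← intervalIntegral.integral_const_mul,
      ← intervalIntegral.integral_sub
        ((by fun_prop : Continuous fun t : ℝ =>
          (2*(m:ℝ)+2) * ((1 - t^2)^m * Real.cos (x*t))).intervalIntegrable 0 1)
        ((by fun_prop : Continuous fun t : ℝ =>
          (2*(m:ℝ)+3) * ((1 - t^2)^(m+1) * Real.cos (x*t))).intervalIntegrable 0 1)]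
    apply intervalIntegral.integral_congr; intro t _
    ring
  rw [hL, hR] at ibp
  rw [ibp]
  norm_num

lemma Gb_zero_eq (x : ℝ) (hx : x ≠ 0) : Gb 0 x = Real.sin x / x := by
  have : Gb 0 x = ∫ t in (0:ℝ)..1, Real.cos (x*t) := by
    rw [Gb]; apply intervalIntegral.integral_congr; intro t _; simp
  rw [this, intervalIntegral.integral_comp_mul_left (fun y => Real.cos y) hx]
  simp [integral_cos, div_eq_inv_mul]

lemma Gb_decay : ∀ ℓ : ℕ, ∃ c : ℝ, 1 ≤ c ∧ ∀ x : ℝ, 1 ≤ x → |Gb ℓ x| ≤ c / x^(ℓ+1) := by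
  have rec2 : ∀ (m : ℕ) (x : ℝ), x ≠ 0 →
      Gb (m+2) x = 2*((m:ℝ)+2)/x^2 * ((2*m+3) * Gb (m+1) x - (2*m+2) * Gb m x) := by
    intro m x hx
    have h1 := x_mul_Hb_succ m x
    have h2 := Hb_eq (m+1) x
    rw [h2] at h1
    have hm : ((m:ℝ)+1+1) ≠ 0 := by positivity
    field_simp at h1 ⊢
    push_cast at h1 ⊢
    nlinarith [h1]
  have rec1 : ∀ x : ℝ, x ≠ 0 → Gb 1 x = 2/x^2 * (Gb 0 x - Real.cos x) := by
    intro x hx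
    have h1 := x_mul_Hb_zero x
    have h2 := Hb_eq 0 x
    rw [h2] at h1
    field_simp at h1 ⊢
    norm_num at h1 ⊢; nlinarith [h1]
  have base0 : ∀ x : ℝ, 1 ≤ x → |Gb 0 x| ≤ 1 / x^(0+1) := by
    intro x hx
    have hx0 : (0:ℝ) < x := by linarith
    rw [Gb_zero_eq x hx0.ne', abs_div, abs_of_pos hx0, pow_one]
    gcongr
    exact Real.abs_sin_le_one x
  have base1 : ∀ x : ℝ, 1 ≤ x → |Gb 1 x| ≤ 4 / x^(1+1) := by
    intro x hx
    have hx0 : (0:ℝ) < x := by linarith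
    rw [rec1 x hx0.ne']
    have h1 : |Gb 0 x - Real.cos x| ≤ 2 := by
      have := base0 x hx
      have h2 := Real.abs_cos_le_one x
      have h3 : 1/x^(0+1) ≤ 1 := by
        rw [pow_one]
        rw [div_le_one hx0]; exact hx
      calc |Gb 0 x - Real.cos x| ≤ |Gb 0 x| + |Real.cos x| := abs_sub _ _
        _ ≤ 1 + 1 := by have := this.trans h3; linarith
        _ = 2 := by norm_num
    rw [abs_mul]
    have hx2 : (0:ℝ) < x^2 := by positivity
    have : |2/x^2| = 2/x^2 := abs_of_pos (by positivity)
    rw [this]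
    calc 2/x^2 * |Gb 0 x - Real.cos x| ≤ 2/x^2 * 2 := by
          apply mul_le_mul_of_nonneg_left h1 (by positivity)
      _ = 4 / x^(1+1) := by ring
  -- two-step strong induction
  suffices h : ∀ ℓ : ℕ, (∃ c : ℝ, 1 ≤ c ∧ ∀ x : ℝ, 1 ≤ x → |Gb ℓ x| ≤ c / x^(ℓ+1)) ∧
      (∃ c : ℝ, 1 ≤ c ∧ ∀ x : ℝ, 1 ≤ x → |Gb (ℓ+1) x| ≤ c / x^(ℓ+2)) by
    intro ℓ; exact (h ℓ).1
  intro ℓ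
  induction ℓ with
  | zero => exact ⟨⟨1, le_refl 1, base0⟩, ⟨4, by norm_num, base1⟩⟩
  | succ m ih =>
    obtain ⟨⟨c₁, hc₁, h₁⟩, ⟨c₂, hc₂, h₂⟩⟩ := ih
    refine ⟨⟨c₂, hc₂, h₂⟩, ⟨2*((m:ℝ)+2) * ((2*m+3)*c₂ + (2*m+2)*c₁), ?_, ?_⟩⟩
    · have hm : (0:ℝ) ≤ m := Nat.cast_nonneg m
      have h5 : (4*(m:ℝ)+5) ≤ (2*m+3)*c₂ + (2*m+2)*c₁ := by nlinarith
      exact le_trans (by nlinarith) (mul_le_mul_of_nonneg_left h5 (by positivity))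
    · intro x hx
      have hx0 : (0:ℝ) < x := by linarith
      rw [rec2 m x hx0.ne', abs_mul,
        abs_of_pos (show (0:ℝ) < 2*((m:ℝ)+2)/x^2 by positivity)]
      have hA : |Gb (m+1) x| ≤ c₂ / x^(m+1) := by
        refine (h₂ x hx).trans ?_
        have hp : (0:ℝ) < x^(m+1) := by positivity
        have hle : x^(m+1) ≤ x^(m+2) := pow_le_pow_right₀ hx (by omega)
        exact div_le_div_of_nonneg_left (by linarith) hp hle
      have hB := h₁ x hx
      have key : |(2*(m:ℝ)+3) * Gb (m+1) x - (2*(m:ℝ)+2) * Gb m x|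
          ≤ ((2*(m:ℝ)+3)*c₂ + (2*(m:ℝ)+2)*c₁) / x^(m+1) := by
        have hm : (0:ℝ) ≤ m := Nat.cast_nonneg m
        calc |(2*(m:ℝ)+3) * Gb (m+1) x - (2*(m:ℝ)+2) * Gb m x|
            ≤ |(2*(m:ℝ)+3) * Gb (m+1) x| + |(2*(m:ℝ)+2) * Gb m x| := abs_sub _ _
          _ = (2*(m:ℝ)+3) * |Gb (m+1) x| + (2*(m:ℝ)+2) * |Gb m x| := by
              rw [abs_mul, abs_mul, abs_of_pos (by positivity : (0:ℝ) < 2*(m:ℝ)+3),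
                abs_of_pos (by positivity : (0:ℝ) < 2*(m:ℝ)+2)]
          _ ≤ (2*(m:ℝ)+3) * (c₂ / x^(m+1)) + (2*(m:ℝ)+2) * (c₁ / x^(m+1)) := by
              gcongr
          _ = ((2*(m:ℝ)+3)*c₂ + (2*(m:ℝ)+2)*c₁) / x^(m+1) := by ring
      calc 2*((m:ℝ)+2)/x^2 * |(2*(m:ℝ)+3) * Gb (m+1) x - (2*(m:ℝ)+2) * Gb m x|
          ≤ 2*((m:ℝ)+2)/x^2 * (((2*(m:ℝ)+3)*c₂ + (2*(m:ℝ)+2)*c₁) / x^(m+1)) := by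
            apply mul_le_mul_of_nonneg_left key (by positivity)
        _ = 2*((m:ℝ)+2) * ((2*(m:ℝ)+3)*c₂ + (2*(m:ℝ)+2)*c₁) / x^(m+1+1+1) := by
            rw [show m+1+1+1 = 2+(m+1) by omega, pow_add]
            field_simp
            ring

-- section 3
noncomputable def jf (ℓ : ℕ) (x : ℝ) : ℝ := x^ℓ / (2^ℓ * ℓ.factorial) * Gb ℓ x

noncomputable def djf (ℓ : ℕ) (x : ℝ) : ℝ :=
  ((ℓ:ℝ) * x^(ℓ-1) * Gb ℓ x - x^ℓ * Hb ℓ x) / (2^ℓ * ℓ.factorial)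

noncomputable def d2jf (ℓ : ℕ) (x : ℝ) : ℝ :=
  ((ℓ:ℝ) * ((ℓ-1 : ℕ):ℝ) * x^(ℓ-1-1) * Gb ℓ x - 2*(ℓ:ℝ)*x^(ℓ-1)*Hb ℓ x
    - x^ℓ * (Gb ℓ x - Gb (ℓ+1) x)) / (2^ℓ * ℓ.factorial)

lemma fact_ne (ℓ : ℕ) : (2:ℝ)^ℓ * ℓ.factorial ≠ 0 := by positivity

lemma hasDerivAt_jf (ℓ : ℕ) (x : ℝ) : HasDerivAt (jf ℓ) (djf ℓ x) x := by
  have h := ((hasDerivAt_pow ℓ x).div_const ((2:ℝ)^ℓ * ℓ.factorial)).mul (hasDerivAt_Gb ℓ x)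
  refine hasDerivAt_of_eq' h ?_
  rw [djf]
  field_simp
  ring

lemma hasDerivAt_djf (ℓ : ℕ) (x : ℝ) : HasDerivAt (djf ℓ) (d2jf ℓ x) x := by
  have h1 := ((hasDerivAt_pow (ℓ-1) x).const_mul (ℓ:ℝ)).mul (hasDerivAt_Gb ℓ x)
  have h2 := (hasDerivAt_pow ℓ x).mul (hasDerivAt_Hb ℓ x)
  have h := (h1.sub h2).div_const ((2:ℝ)^ℓ * ℓ.factorial)
  refine hasDerivAt_of_eq' h ?_
  rw [d2jf]
  rw [Nat.sub_sub]
  field_simp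
  ring

lemma sb_eq_jf (ℓ : ℕ) : ∀ x : ℝ, 0 < x → sphericalBessel ℓ x = jf ℓ x := by
  have key : ∀ ℓ : ℕ, ∀ x : ℝ, 0 < x →
      ((fun f : ℝ → ℝ => fun y => deriv f y / y)^[ℓ] (fun y => Real.sin y / y)) x
        = (-1)^ℓ / (2^ℓ * ℓ.factorial) * Gb ℓ x := by
    intro ℓ
    induction ℓ with
    | zero =>
      intro x hx
      simp [Gb_zero_eq x hx.ne']
    | succ m ih =>
      intro x hx
      rw [Function.iterate_succ_apply']
      have hev : ((fun f : ℝ → ℝ => fun y => deriv f y / y)^[m] (fun y => Real.sin y / y))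
          =ᶠ[nhds x] fun y => (-1)^m / (2^m * m.factorial) * Gb m y := by
        filter_upwards [Ioi_mem_nhds hx] with y hy
        exact ih y hy
      have hder : deriv ((fun f : ℝ → ℝ => fun y => deriv f y / y)^[m] (fun y => Real.sin y / y)) x
          = (-1)^m / (2^m * m.factorial) * (-(Hb m x)) := by
        rw [hev.deriv_eq]
        exact ((hasDerivAt_Gb m x).const_mul _).deriv
      simp only [hder]
      rw [Hb_eq m x]
      have h1 : ((m:ℝ)+1) ≠ 0 := by positivity
      have h2 : (m.factorial : ℝ) ≠ 0 := by positivity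
      rw [Nat.factorial_succ]
      push_cast
      field_simp
      ring
  intro x hx
  rw [sphericalBessel, key ℓ x hx, jf, neg_pow]
  have h1 : ((-1:ℝ))^ℓ * (-1:ℝ)^ℓ = 1 := by
    rw [← pow_add, ← two_mul, pow_mul]; norm_num
  calc (-1:ℝ)^ℓ * x^ℓ * ((-1)^ℓ / (2^ℓ * ℓ.factorial) * Gb ℓ x)
      = ((-1:ℝ)^ℓ * (-1)^ℓ) * (x^ℓ / (2^ℓ * ℓ.factorial) * Gb ℓ x) := by ring
    _ = x^ℓ / (2^ℓ * ℓ.factorial) * Gb ℓ x := by rw [h1, one_mul]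

lemma ode_jf (ℓ : ℕ) (x : ℝ) (hx : 0 < x) :
    -(d2jf ℓ x + (2/x) * djf ℓ x - ((ℓ:ℝ)*((ℓ:ℝ)+1)/x^2) * jf ℓ x) = jf ℓ x := by
  have hx0 : x ≠ 0 := hx.ne'
  have hf := fact_ne ℓ
  rcases ℓ with _ | _ | m
  · simp only [jf, djf, d2jf, Hb_eq]
    norm_num
    field_simp
    ring
  · simp only [jf, djf, d2jf, Hb_eq]
    norm_num
    field_simp
    ring
  · simp only [jf, djf, d2jf, Hb_eq]
    simp only [show m+1+1-1 = m+1 from rfl, show m+1+1-1-1 = m from rfl]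
    push_cast
    field_simp
    ring

-- section 4 : bounds
/-- The master dominating shape. -/
noncomputable def bndf (m : ℕ) (x : ℝ) : ℝ := x^m / (1+x)^(m+1)

lemma bndf_nonneg (m : ℕ) (x : ℝ) (hx : 0 < x) : 0 ≤ bndf m x := by
  rw [bndf]; positivity

lemma term_bound (a b m : ℕ) (hma : m ≤ a) (hab : a ≤ b) {c : ℝ} (hc : 1 ≤ c)
    (hG : ∀ x : ℝ, 1 ≤ x → |Gb b x| ≤ c / x^(b+1)) :
    ∀ x : ℝ, 0 < x → x^a * |Gb b x| ≤ 2^(m+1) * c * bndf m x := by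
  intro x hx
  rw [bndf]
  rcases le_or_gt x 1 with hx1 | hx1
  · have h1 : x^a * |Gb b x| ≤ x^m := by
      calc x^a * |Gb b x| ≤ x^a * 1 := by
            apply mul_le_mul_of_nonneg_left (abs_Gb_le_one b x) (by positivity)
        _ = x^a := mul_one _
        _ ≤ x^m := pow_le_pow_of_le_one hx.le hx1 hma
    refine h1.trans ?_
    have h2 : (1+x)^(m+1) ≤ 2^(m+1) * c := by
      calc (1+x)^(m+1) ≤ 2^(m+1) := by
            apply pow_le_pow_left₀ (by linarith) (by linarith)
        _ ≤ 2^(m+1) * c := le_mul_of_one_le_right (by positivity) hc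
    have hpos : (0:ℝ) < (1+x)^(m+1) := by positivity
    calc x^m = x^m * (1+x)^(m+1) / (1+x)^(m+1) := by field_simp
      _ ≤ x^m * (2^(m+1)*c) / (1+x)^(m+1) := by
          have := mul_le_mul_of_nonneg_left h2 (by positivity : (0:ℝ) ≤ x^m)
          gcongr
      _ = 2^(m+1) * c * (x^m/(1+x)^(m+1)) := by ring
  · have h1 : x^a * |Gb b x| ≤ c / x := by
      calc x^a * |Gb b x| ≤ x^a * (c / x^(b+1)) := by
            apply mul_le_mul_of_nonneg_left (hG x hx1.le) (by positivity)
        _ ≤ x^b * (c / x^(b+1)) := by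
            apply mul_le_mul_of_nonneg_right (pow_le_pow_right₀ hx1.le hab) (by positivity)
        _ = c / x := by
            rw [pow_succ]
            field_simp
    refine h1.trans ?_
    have h2 : (1+x)^(m+1) ≤ 2^(m+1) * (x^m * x) := by
      calc (1+x)^(m+1) ≤ (2*x)^(m+1) := by
            apply pow_le_pow_left₀ (by linarith) (by linarith)
        _ = 2^(m+1) * (x^m * x) := by rw [mul_pow, pow_succ]; ring
    have hpos : (0:ℝ) < (1+x)^(m+1) := by positivity
    rw [div_le_iff₀ hx]
    calc c = c * (1+x)^(m+1) / (1+x)^(m+1) := by field_simp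
      _ ≤ c * (2^(m+1)*(x^m*x)) / (1+x)^(m+1) := by
          have hc0 : (0:ℝ) ≤ c := by linarith
          gcongr
      _ = 2^(m+1) * c * (x^m/(1+x)^(m+1)) * x := by ring

lemma one_le_factc (ℓ : ℕ) : (1:ℝ) ≤ 2^ℓ * ℓ.factorial := by
  have h1 : (1:ℝ) ≤ 2^ℓ := one_le_pow₀ (by norm_num)
  have h2 : (1:ℝ) ≤ ℓ.factorial := by exact_mod_cast ℓ.factorial_pos
  nlinarith

lemma jf_bound (ℓ : ℕ) : ∃ C : ℝ, 0 < C ∧ ∀ x : ℝ, 0 < x → |jf ℓ x| ≤ C * bndf ℓ x := by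
  obtain ⟨c₀, hc₀, hG₀⟩ := Gb_decay ℓ
  refine ⟨2^(ℓ+1)*c₀, by positivity, fun x hx => ?_⟩
  have T0 := term_bound ℓ ℓ ℓ (le_refl ℓ) (le_refl ℓ) hc₀ hG₀ x hx
  calc |jf ℓ x| = x^ℓ/(2^ℓ*ℓ.factorial) * |Gb ℓ x| := by
        rw [jf, abs_mul, abs_of_pos (show (0:ℝ) < x^ℓ/(2^ℓ*ℓ.factorial) by positivity)]
    _ ≤ x^ℓ * |Gb ℓ x| := by
        apply mul_le_mul_of_nonneg_right _ (abs_nonneg _)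
        exact div_le_self (by positivity) (one_le_factc ℓ)
    _ ≤ 2^(ℓ+1)*c₀ * bndf ℓ x := T0

lemma djf_bound (ℓ : ℕ) : ∃ C : ℝ, 0 < C ∧ ∀ x : ℝ, 0 < x →
    |djf ℓ x| ≤ C * bndf (ℓ-1) x := by
  obtain ⟨c₀, hc₀, hG₀⟩ := Gb_decay ℓ
  obtain ⟨c₁, hc₁, hG₁⟩ := Gb_decay (ℓ+1)
  refine ⟨(ℓ:ℝ) * (2^(ℓ-1+1)*c₀) + 2^(ℓ-1+1)*c₁, by positivity, fun x hx => ?_⟩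
  have T1 := term_bound (ℓ-1) ℓ (ℓ-1) (le_refl _) (Nat.sub_le ℓ 1) hc₀ hG₀ x hx
  have T2 := term_bound (ℓ+1) (ℓ+1) (ℓ-1) (by omega) (le_refl _) hc₁ hG₁ x hx
  have e : djf ℓ x = ((ℓ:ℝ) * x^(ℓ-1) * Gb ℓ x - x^(ℓ+1)/(2*((ℓ:ℝ)+1)) * Gb (ℓ+1) x)
      / (2^ℓ*ℓ.factorial) := by
    rw [djf, Hb_eq, pow_succ]
    have : ((ℓ:ℝ)+1) ≠ 0 := by positivity
    field_simp
  have hl1 : ((ℓ:ℝ)+1) ≠ 0 := by positivity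
  calc |djf ℓ x|
      ≤ |(ℓ:ℝ) * x^(ℓ-1) * Gb ℓ x - x^(ℓ+1)/(2*((ℓ:ℝ)+1)) * Gb (ℓ+1) x| := by
        rw [e, abs_div, abs_of_pos (show (0:ℝ) < 2^ℓ*ℓ.factorial by positivity)]
        exact div_le_self (abs_nonneg _) (one_le_factc ℓ)
    _ ≤ (ℓ:ℝ) * (x^(ℓ-1) * |Gb ℓ x|) + x^(ℓ+1) * |Gb (ℓ+1) x| := by
        refine (abs_sub _ _).trans ?_
        apply add_le_add
        · rw [abs_mul, abs_mul, abs_of_nonneg (by positivity : (0:ℝ) ≤ (ℓ:ℝ)),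
            abs_of_pos (by positivity : (0:ℝ) < x^(ℓ-1)), mul_assoc]
        · rw [abs_mul, abs_div]
          rw [abs_of_pos (by positivity : (0:ℝ) < x^(ℓ+1)),
            abs_of_pos (by positivity : (0:ℝ) < 2*((ℓ:ℝ)+1))]
          apply mul_le_mul_of_nonneg_right _ (abs_nonneg _)
          exact div_le_self (by positivity) (by nlinarith [Nat.cast_nonneg (α := ℝ) ℓ])
    _ ≤ (ℓ:ℝ) * (2^(ℓ-1+1)*c₀ * bndf (ℓ-1) x) + 2^(ℓ-1+1)*c₁ * bndf (ℓ-1) x := by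
        apply add_le_add _ T2
        exact mul_le_mul_of_nonneg_left T1 (Nat.cast_nonneg ℓ)
    _ = ((ℓ:ℝ) * (2^(ℓ-1+1)*c₀) + 2^(ℓ-1+1)*c₁) * bndf (ℓ-1) x := by ring

lemma d2jf_bound (ℓ : ℕ) : ∃ C : ℝ, 0 < C ∧ ∀ x : ℝ, 0 < x →
    |d2jf ℓ x| ≤ C * bndf (ℓ-2) x := by
  obtain ⟨c₀, hc₀, hG₀⟩ := Gb_decay ℓ
  obtain ⟨c₁, hc₁, hG₁⟩ := Gb_decay (ℓ+1)
  refine ⟨(ℓ:ℝ) * ((ℓ-1:ℕ):ℝ) * (2^(ℓ-2+1)*c₀) + 2^(ℓ-2+1)*c₁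
    + (2^(ℓ-2+1)*c₀ + 2^(ℓ-2+1)*c₁), by positivity, fun x hx => ?_⟩
  have T3 := term_bound (ℓ-2) ℓ (ℓ-2) (le_refl _) (by omega) hc₀ hG₀ x hx
  have T4 := term_bound ((ℓ-1)+1) (ℓ+1) (ℓ-2) (by omega) (by omega) hc₁ hG₁ x hx
  have T5 := term_bound ℓ ℓ (ℓ-2) (by omega) (le_refl _) hc₀ hG₀ x hx
  have T6 := term_bound ℓ (ℓ+1) (ℓ-2) (by omega) (by omega) hc₁ hG₁ x hx
  have e : d2jf ℓ x = ((ℓ:ℝ) * ((ℓ-1:ℕ):ℝ) * x^(ℓ-2) * Gb ℓ x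
      - (ℓ:ℝ)/((ℓ:ℝ)+1) * x^((ℓ-1)+1) * Gb (ℓ+1) x
      - (x^ℓ * Gb ℓ x - x^ℓ * Gb (ℓ+1) x)) / (2^ℓ*ℓ.factorial) := by
    rw [d2jf, Hb_eq, show ℓ-1-1 = ℓ-2 by omega, pow_succ]
    have : ((ℓ:ℝ)+1) ≠ 0 := by positivity
    field_simp
  calc |d2jf ℓ x|
      ≤ |(ℓ:ℝ) * ((ℓ-1:ℕ):ℝ) * x^(ℓ-2) * Gb ℓ x
        - (ℓ:ℝ)/((ℓ:ℝ)+1) * x^((ℓ-1)+1) * Gb (ℓ+1) x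
        - (x^ℓ * Gb ℓ x - x^ℓ * Gb (ℓ+1) x)| := by
        rw [e, abs_div, abs_of_pos (show (0:ℝ) < 2^ℓ*ℓ.factorial by positivity)]
        exact div_le_self (abs_nonneg _) (one_le_factc ℓ)
    _ ≤ ((ℓ:ℝ) * ((ℓ-1:ℕ):ℝ) * (x^(ℓ-2) * |Gb ℓ x|) + x^((ℓ-1)+1) * |Gb (ℓ+1) x|)
        + (x^ℓ * |Gb ℓ x| + x^ℓ * |Gb (ℓ+1) x|) := by
        refine (abs_sub _ _).trans (add_le_add ((abs_sub _ _).trans (add_le_add ?_ ?_))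
          ((abs_sub _ _).trans (add_le_add ?_ ?_)))
        · rw [abs_mul, abs_mul, abs_mul,
            abs_of_nonneg (Nat.cast_nonneg (α := ℝ) ℓ),
            abs_of_nonneg (Nat.cast_nonneg (α := ℝ) (ℓ-1)),
            abs_of_pos (by positivity : (0:ℝ) < x^(ℓ-2)), mul_assoc]
        · rw [abs_mul, abs_mul, abs_of_pos (by positivity : (0:ℝ) < x^((ℓ-1)+1))]
          apply mul_le_mul_of_nonneg_right _ (abs_nonneg _)
          apply mul_le_of_le_one_left (by positivity)
          rw [abs_div, abs_of_nonneg (Nat.cast_nonneg (α := ℝ) ℓ),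
            abs_of_pos (by positivity : (0:ℝ) < (ℓ:ℝ)+1)]
          rw [div_le_one (by positivity)]
          linarith
        · rw [abs_mul, abs_of_pos (by positivity : (0:ℝ) < x^ℓ)]
        · rw [abs_mul, abs_of_pos (by positivity : (0:ℝ) < x^ℓ)]
    _ ≤ ((ℓ:ℝ) * ((ℓ-1:ℕ):ℝ) * (2^(ℓ-2+1)*c₀ * bndf (ℓ-2) x) + 2^(ℓ-2+1)*c₁ * bndf (ℓ-2) x)
        + (2^(ℓ-2+1)*c₀ * bndf (ℓ-2) x + 2^(ℓ-2+1)*c₁ * bndf (ℓ-2) x) := by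
        apply add_le_add (add_le_add _ T4) (add_le_add T5 T6)
        exact mul_le_mul_of_nonneg_left T3 (by positivity)
    _ = ((ℓ:ℝ) * ((ℓ-1:ℕ):ℝ) * (2^(ℓ-2+1)*c₀) + 2^(ℓ-2+1)*c₁
        + (2^(ℓ-2+1)*c₀ + 2^(ℓ-2+1)*c₁)) * bndf (ℓ-2) x := by ring

lemma bndf_mono (m : ℕ) {k a b r : ℝ} (hk : 0 < k) (ha : 0 < a) (har : a ≤ r) (hrb : r ≤ b) :
    bndf m (k*r) ≤ (b*k)^m / (1+a*k)^(m+1) := by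
  have hb : 0 < b := lt_of_lt_of_le ha (har.trans hrb)
  have hr : 0 < r := lt_of_lt_of_le ha har
  rw [bndf]
  apply div_le_div₀ (by positivity)
  · apply pow_le_pow_left₀ (by positivity)
    nlinarith
  · positivity
  · apply pow_le_pow_left₀ (by positivity)
    nlinarith

/-- The master dominating function: integrable on `(0,∞)`. -/
lemma integrable_dom (p : ℤ) (hp : p ≤ 0) (m₁ m₂ : ℕ) (a₁ a₂ b₁ b₂ : ℝ)
    (hm : (-1:ℝ) < (p:ℝ) + m₁ + m₂)
    (ha₁ : 0 < a₁) (ha₂ : 0 < a₂) (hb₁ : 0 < b₁) (hb₂ : 0 < b₂) :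
    IntegrableOn (fun k : ℝ =>
      k^p * ((b₁*k)^m₁/(1+a₁*k)^(m₁+1)) * ((b₂*k)^m₂/(1+a₂*k)^(m₂+1))) (Set.Ioi 0) := by
  set ψ : ℝ → ℝ := fun k =>
    k^p * ((b₁*k)^m₁/(1+a₁*k)^(m₁+1)) * ((b₂*k)^m₂/(1+a₂*k)^(m₂+1)) with hψ
  have hcont : ContinuousOn ψ (Set.Ioi 0) := by
    apply ContinuousOn.mul
    apply ContinuousOn.mul
    · intro k hk
      exact (continuousAt_zpow₀ k p (Or.inl (ne_of_gt hk))).continuousWithinAt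
    · apply ContinuousOn.div
      · fun_prop
      · fun_prop
      · intro k hk
        have : (0:ℝ) < k := hk
        positivity
    · apply ContinuousOn.div
      · fun_prop
      · fun_prop
      · intro k hk
        have : (0:ℝ) < k := hk
        positivity
  have hψ_nonneg : ∀ k ∈ Set.Ioi (0:ℝ), 0 ≤ ψ k := by
    intro k hk
    have hk0 : (0:ℝ) < k := hk
    have h1 : (0:ℝ) < k^p := zpow_pos hk0 p
    rw [hψ]
    positivity
  have hsplit : Set.Ioi (0:ℝ) = Set.Ioc 0 1 ∪ Set.Ioi 1 := by
    rw [Set.Ioc_union_Ioi_eq_Ioi]; norm_num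
  rw [hsplit]
  apply MeasureTheory.IntegrableOn.union
  · -- near 0 : dominate by K * k ^ (p + m₁ + m₂ : ℝ)
    set q : ℝ := (p:ℝ) + m₁ + m₂ with hq
    have hint : IntegrableOn (fun k : ℝ => (b₁^m₁ * b₂^m₂) * k ^ q) (Set.Ioc (0:ℝ) 1) := by
      apply Integrable.const_mul
      have := intervalIntegral.intervalIntegrable_rpow' (a := 0) (b := 1) hm
      rwa [intervalIntegrable_iff_integrableOn_Ioc_of_le (by norm_num)] at this
    apply Integrable.mono' hint
    · exact (hcont.mono (Set.Ioc_subset_Ioi_self)).aestronglyMeasurable measurableSet_Ioc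
    · rw [ae_restrict_iff' measurableSet_Ioc]
      apply Filter.Eventually.of_forall
      intro k hk
      obtain ⟨hk0, hk1⟩ := hk
      rw [Real.norm_eq_abs, abs_of_nonneg (hψ_nonneg k hk0)]
      have e1 : k ^ q = k^p * k^(m₁:ℕ) * k^(m₂:ℕ) := by
        rw [hq, Real.rpow_add hk0, Real.rpow_add hk0, Real.rpow_intCast,
          Real.rpow_natCast, Real.rpow_natCast]
      rw [hψ, e1]
      have h2 : (b₁*k)^m₁/(1+a₁*k)^(m₁+1) ≤ b₁^m₁ * k^m₁ := by
        rw [mul_pow]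
        apply div_le_self (by positivity)
        apply one_le_pow₀
        nlinarith
      have h3 : (b₂*k)^m₂/(1+a₂*k)^(m₂+1) ≤ b₂^m₂ * k^m₂ := by
        rw [mul_pow]
        apply div_le_self (by positivity)
        apply one_le_pow₀
        nlinarith
      have h1 : (0:ℝ) < k^p := zpow_pos hk0 p
      calc k^p * ((b₁*k)^m₁/(1+a₁*k)^(m₁+1)) * ((b₂*k)^m₂/(1+a₂*k)^(m₂+1))
          ≤ k^p * (b₁^m₁ * k^m₁) * (b₂^m₂ * k^m₂) := by
            apply mul_le_mul
            · exact mul_le_mul_of_nonneg_left h2 h1.le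
            · exact h3
            · positivity
            · positivity
        _ = b₁^m₁ * b₂^m₂ * (k^p * k^(m₁:ℕ) * k^(m₂:ℕ)) := by ring
  · -- near ∞ : dominate by K * k ^ ((p:ℝ) - 2)
    have hint : IntegrableOn
        (fun k : ℝ => (b₁^m₁ * b₂^m₂ / (a₁^(m₁+1) * a₂^(m₂+1))) * k ^ ((p:ℝ) - 2))
        (Set.Ioi (1:ℝ)) := by
      apply Integrable.const_mul
      apply integrableOn_Ioi_rpow_of_lt _ one_pos
      have : (p:ℝ) ≤ 0 := by exact_mod_cast hp
      linarith
    apply Integrable.mono' hint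
    · exact (hcont.mono (fun k (hk : k ∈ Set.Ioi (1:ℝ)) => show (0:ℝ) < k from lt_trans one_pos hk)).aestronglyMeasurable measurableSet_Ioi
    · rw [ae_restrict_iff' measurableSet_Ioi]
      apply Filter.Eventually.of_forall
      intro k hk
      have hk1 : (1:ℝ) < k := hk
      have hk0 : (0:ℝ) < k := lt_trans one_pos hk1
      rw [Real.norm_eq_abs, abs_of_nonneg (hψ_nonneg k hk0)]
      have h2 : (b₁*k)^m₁/(1+a₁*k)^(m₁+1) ≤ b₁^m₁/a₁^(m₁+1) * k⁻¹ := by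
        have hd : (a₁*k)^(m₁+1) ≤ (1+a₁*k)^(m₁+1) := by
          apply pow_le_pow_left₀ (by positivity)
          linarith
        calc (b₁*k)^m₁/(1+a₁*k)^(m₁+1) ≤ (b₁*k)^m₁/(a₁*k)^(m₁+1) := by
              apply div_le_div_of_nonneg_left (by positivity) (by positivity) hd
          _ = b₁^m₁/a₁^(m₁+1) * k⁻¹ := by
              rw [mul_pow, mul_pow, pow_succ]
              field_simp
              ring
      have h3 : (b₂*k)^m₂/(1+a₂*k)^(m₂+1) ≤ b₂^m₂/a₂^(m₂+1) * k⁻¹ := by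
        have hd : (a₂*k)^(m₂+1) ≤ (1+a₂*k)^(m₂+1) := by
          apply pow_le_pow_left₀ (by positivity)
          linarith
        calc (b₂*k)^m₂/(1+a₂*k)^(m₂+1) ≤ (b₂*k)^m₂/(a₂*k)^(m₂+1) := by
              apply div_le_div_of_nonneg_left (by positivity) (by positivity) hd
          _ = b₂^m₂/a₂^(m₂+1) * k⁻¹ := by
              rw [mul_pow, mul_pow, pow_succ]
              field_simp
              ring
      have h1 : (0:ℝ) < k^p := zpow_pos hk0 p
      have e1 : k ^ ((p:ℝ) - 2) = k^p * k⁻¹ * k⁻¹ := by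
        rw [show (p:ℝ) - 2 = (p:ℝ) + (-1) + (-1) by ring, Real.rpow_add hk0,
          Real.rpow_add hk0, Real.rpow_intCast, Real.rpow_neg_one]
      calc ψ k ≤ k^p * (b₁^m₁/a₁^(m₁+1) * k⁻¹) * (b₂^m₂/a₂^(m₂+1) * k⁻¹) := by
            rw [hψ]
            apply mul_le_mul
            · exact mul_le_mul_of_nonneg_left h2 h1.le
            · exact h3
            · positivity
            · positivity
        _ = b₁^m₁ * b₂^m₂ / (a₁^(m₁+1) * a₂^(m₂+1)) * (k^p * k⁻¹ * k⁻¹) := by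
            field_simp
        _ = b₁^m₁ * b₂^m₂ / (a₁^(m₁+1) * a₂^(m₂+1)) * k ^ ((p:ℝ) - 2) := by rw [e1]

-- section 6
lemma cont_jf (ℓ : ℕ) : Continuous (jf ℓ) :=
  continuous_iff_continuousAt.mpr fun x => (hasDerivAt_jf ℓ x).continuousAt

lemma cont_djf (ℓ : ℕ) : Continuous (djf ℓ) :=
  continuous_iff_continuousAt.mpr fun x => (hasDerivAt_djf ℓ x).continuousAt

lemma cont_Gb (ℓ : ℕ) : Continuous (Gb ℓ) :=
  continuous_iff_continuousAt.mpr fun x => (hasDerivAt_Gb ℓ x).continuousAt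

lemma cont_Hb (ℓ : ℕ) : Continuous (Hb ℓ) :=
  continuous_iff_continuousAt.mpr fun x => (hasDerivAt_Hb ℓ x).continuousAt

lemma cont_d2jf (ℓ : ℕ) : Continuous (d2jf ℓ) := by
  unfold d2jf
  apply Continuous.div_const
  apply Continuous.sub
  apply Continuous.sub
  · exact (continuous_const.mul (continuous_pow _)).mul (cont_Gb ℓ)
  · exact (continuous_const.mul (continuous_pow _)).mul (cont_Hb ℓ)
  · exact (continuous_pow _).mul ((cont_Gb ℓ).sub (cont_Gb (ℓ+1)))

lemma aesm_integrand (p : ℤ) (g : ℝ → ℝ) (hg : Continuous g) (h : ℝ → ℝ) (hh : Continuous h)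
    (r r' : ℝ) :
    AEStronglyMeasurable (fun k : ℝ => k^p * g (k*r) * h (k*r'))
      (volume.restrict (Set.Ioi 0)) := by
  apply ContinuousOn.aestronglyMeasurable _ measurableSet_Ioi
  apply ContinuousOn.mul
  apply ContinuousOn.mul
  · intro k hk
    exact (continuousAt_zpow₀ k p (Or.inl (ne_of_gt hk))).continuousWithinAt
  · exact (hg.comp (continuous_id.mul continuous_const)).continuousOn
  · exact (hh.comp (continuous_id.mul continuous_const)).continuousOn

set_option maxHeartbeats 2000000 in
theorem main_step (ℓ ℓ' : ℕ) (n : ℤ) (hn : n ≤ -2)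
    (hconv : 0 < (ℓ : ℤ) + ℓ' + n + 1) (r' : ℝ) (hr' : 0 < r') (r₀ : ℝ) (hr₀ : 0 < r₀) :
    IntegrableOn (fun k : ℝ => k^n * jf ℓ (k*r₀) * jf ℓ' (k*r')) (Set.Ioi 0) ∧
    IntegrableOn (fun k : ℝ => k^(n+1) * djf ℓ (k*r₀) * jf ℓ' (k*r')) (Set.Ioi 0) ∧
    IntegrableOn (fun k : ℝ => k^(n+2) * d2jf ℓ (k*r₀) * jf ℓ' (k*r')) (Set.Ioi 0) ∧
    HasDerivAt (fun r : ℝ => ∫ k in Set.Ioi (0:ℝ), k^n * jf ℓ (k*r) * jf ℓ' (k*r'))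
      (∫ k in Set.Ioi (0:ℝ), k^(n+1) * djf ℓ (k*r₀) * jf ℓ' (k*r')) r₀ ∧
    HasDerivAt (fun r : ℝ => ∫ k in Set.Ioi (0:ℝ), k^(n+1) * djf ℓ (k*r) * jf ℓ' (k*r'))
      (∫ k in Set.Ioi (0:ℝ), k^(n+2) * d2jf ℓ (k*r₀) * jf ℓ' (k*r')) r₀ := by
  obtain ⟨C₀, hC₀, hB₀⟩ := jf_bound ℓ
  obtain ⟨C₁, hC₁, hB₁⟩ := djf_bound ℓ
  obtain ⟨C₂, hC₂, hB₂⟩ := d2jf_bound ℓ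
  obtain ⟨C', hC', hB'⟩ := jf_bound ℓ'
  set a : ℝ := r₀/2 with ha_def
  set b : ℝ := 3*r₀/2 with hb_def
  have ha : 0 < a := by rw [ha_def]; linarith
  have hb : 0 < b := by rw [hb_def]; linarith
  have hab : a ≤ r₀ := by rw [ha_def]; linarith
  have hrb : r₀ ≤ b := by rw [hb_def]; linarith
  -- casts
  have hconvR : (-1:ℝ) < (n:ℝ) + ℓ + ℓ' := by
    have : (0:ℤ) < ℓ + ℓ' + n + 1 := hconv
    have := (Int.lt_iff_add_one_le).mp this
    have h2 : ((ℓ:ℤ) + ℓ' + n : ℝ) ≥ 0 := by exact_mod_cast (by omega : (0:ℤ) ≤ (ℓ:ℤ) + ℓ' + n)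
    push_cast at h2 ⊢
    linarith
  have hcast1 : (ℓ:ℝ) - 1 ≤ ((ℓ-1 : ℕ):ℝ) := by
    rcases Nat.eq_zero_or_pos ℓ with h | h
    · simp [h]
    · rw [Nat.cast_sub h]; norm_num
  have hcast2 : (ℓ:ℝ) - 2 ≤ ((ℓ-2 : ℕ):ℝ) := by
    rcases Nat.lt_or_ge ℓ 2 with h | h
    · interval_cases ℓ <;> norm_num
    · rw [Nat.cast_sub h]; norm_num
  -- the three dominating functions
  set ψ : ℤ → ℕ → ℝ → ℝ → ℝ := fun p m C k =>
    (C*C') * (k^p * ((b*k)^m/(1+a*k)^(m+1)) * ((r'*k)^ℓ'/(1+r'*k)^(ℓ'+1))) with hψ_def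
  have ψ_int : ∀ (p : ℤ) (m : ℕ) (C : ℝ), p ≤ 0 → (-1:ℝ) < (p:ℝ) + m + ℓ' →
      IntegrableOn (fun k => ψ p m C k) (Set.Ioi 0) := by
    intro p m C hp hm
    exact (integrable_dom p hp m ℓ' a r' b r' hm ha hr' hb hr').const_mul _
  -- pointwise bound
  have bound_gen : ∀ (p : ℤ) (m : ℕ) (C : ℝ), 0 < C → ∀ (u v k r : ℝ), 0 < k →
      a ≤ r → r ≤ b → |u| ≤ C * bndf m (k*r) → |v| ≤ C' * bndf ℓ' (k*r') →
      ‖k^p * u * v‖ ≤ ψ p m C k := by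
    intro p m C hC u v k r hk har hrb' hu hv
    have hkp : (0:ℝ) < k^p := zpow_pos hk p
    have hm1 := bndf_mono m hk ha har hrb'
    have hm2 := bndf_mono ℓ' hk hr' (le_refl r') (le_refl r')
    rw [Real.norm_eq_abs, abs_mul, abs_mul, abs_of_pos hkp]
    calc k^p * |u| * |v|
        ≤ k^p * (C * ((b*k)^m/(1+a*k)^(m+1))) * (C' * ((r'*k)^ℓ'/(1+r'*k)^(ℓ'+1))) := by
          apply mul_le_mul
          · apply mul_le_mul_of_nonneg_left _ hkp.le
            exact hu.trans (mul_le_mul_of_nonneg_left hm1 hC.le)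
          · exact hv.trans (mul_le_mul_of_nonneg_left hm2 hC'.le)
          · exact abs_nonneg v
          · positivity
      _ = ψ p m C k := by rw [hψ_def]; ring
  have int0 : IntegrableOn (fun k : ℝ => k^n * jf ℓ (k*r₀) * jf ℓ' (k*r')) (Set.Ioi 0) := by
    apply Integrable.mono' (ψ_int n ℓ C₀ (by omega) (by push_cast; linarith))
    · exact aesm_integrand n (jf ℓ) (cont_jf ℓ) (jf ℓ') (cont_jf ℓ') r₀ r'
    · rw [ae_restrict_iff' measurableSet_Ioi]
      apply Filter.Eventually.of_forall
      intro k hk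
      have hk0 : (0:ℝ) < k := hk
      exact bound_gen n ℓ C₀ hC₀ _ _ k r₀ hk0 hab hrb
        (hB₀ (k*r₀) (by positivity)) (hB' (k*r') (by positivity))
  have hballmem : ∀ r ∈ Metric.ball r₀ (r₀/2), a ≤ r ∧ r ≤ b ∧ 0 < r := by
    intro r hr
    rw [Real.ball_eq_Ioo] at hr
    obtain ⟨h1, h2⟩ := hr
    refine ⟨by rw [ha_def]; linarith, by rw [hb_def]; linarith, by linarith⟩
  have step1 : IntegrableOn (fun k : ℝ => k^(n+1) * djf ℓ (k*r₀) * jf ℓ' (k*r')) (Set.Ioi 0) ∧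
      HasDerivAt (fun r : ℝ => ∫ k in Set.Ioi (0:ℝ), k^n * jf ℓ (k*r) * jf ℓ' (k*r'))
        (∫ k in Set.Ioi (0:ℝ), k^(n+1) * djf ℓ (k*r₀) * jf ℓ' (k*r')) r₀ := by
    have hbound : ∀ᵐ k ∂(volume.restrict (Set.Ioi (0:ℝ))), ∀ r ∈ Metric.ball r₀ (r₀/2),
        ‖k^(n+1) * djf ℓ (k*r) * jf ℓ' (k*r')‖ ≤ ψ (n+1) (ℓ-1) C₁ k := by
      rw [ae_restrict_iff' measurableSet_Ioi]
      apply Filter.Eventually.of_forall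
      intro k hk r hr
      have hk0 : (0:ℝ) < k := hk
      obtain ⟨h1, h2, h3⟩ := hballmem r hr
      exact bound_gen (n+1) (ℓ-1) C₁ hC₁ _ _ k r hk0 h1 h2
        (hB₁ (k*r) (by positivity)) (hB' (k*r') (by positivity))
    have hdiff : ∀ᵐ k ∂(volume.restrict (Set.Ioi (0:ℝ))), ∀ r ∈ Metric.ball r₀ (r₀/2),
        HasDerivAt (fun r : ℝ => k^n * jf ℓ (k*r) * jf ℓ' (k*r'))
          (k^(n+1) * djf ℓ (k*r) * jf ℓ' (k*r')) r := by
      rw [ae_restrict_iff' measurableSet_Ioi]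
      apply Filter.Eventually.of_forall
      intro k hk r _
      have hk0 : (0:ℝ) < k := hk
      have h1 : HasDerivAt (fun r : ℝ => k*r) k r := by
        simpa using (hasDerivAt_id r).const_mul k
      have h2 : HasDerivAt (fun r : ℝ => jf ℓ (k*r)) (k * djf ℓ (k*r)) r := by
        exact hasDerivAt_of_eq' ((hasDerivAt_jf ℓ (k*r)).comp r h1) (mul_comm _ _)
      have h3 := (h2.const_mul (k^n)).mul_const (jf ℓ' (k*r'))
      refine hasDerivAt_of_eq' h3 ?_
      rw [zpow_add_one₀ (ne_of_gt hk0)]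
      ring
    have eps : (0:ℝ) < r₀/2 := by linarith
    refine hasDerivAt_integral_of_dominated_loc_of_deriv_le (Metric.ball_mem_nhds r₀ eps) ?_ ?_ ?_ hbound ?_ hdiff
    · exact Filter.Eventually.of_forall fun r =>
        aesm_integrand n (jf ℓ) (cont_jf ℓ) (jf ℓ') (cont_jf ℓ') r r'
    · exact int0
    · exact aesm_integrand (n+1) (djf ℓ) (cont_djf ℓ) (jf ℓ') (cont_jf ℓ') r₀ r'
    · exact ψ_int (n+1) (ℓ-1) C₁ (by omega) (by push_cast; linarith)
  have step2 : IntegrableOn (fun k : ℝ => k^(n+2) * d2jf ℓ (k*r₀) * jf ℓ' (k*r')) (Set.Ioi 0) ∧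
      HasDerivAt (fun r : ℝ => ∫ k in Set.Ioi (0:ℝ), k^(n+1) * djf ℓ (k*r) * jf ℓ' (k*r'))
        (∫ k in Set.Ioi (0:ℝ), k^(n+2) * d2jf ℓ (k*r₀) * jf ℓ' (k*r')) r₀ := by
    have hbound : ∀ᵐ k ∂(volume.restrict (Set.Ioi (0:ℝ))), ∀ r ∈ Metric.ball r₀ (r₀/2),
        ‖k^(n+2) * d2jf ℓ (k*r) * jf ℓ' (k*r')‖ ≤ ψ (n+2) (ℓ-2) C₂ k := by
      rw [ae_restrict_iff' measurableSet_Ioi]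
      apply Filter.Eventually.of_forall
      intro k hk r hr
      have hk0 : (0:ℝ) < k := hk
      obtain ⟨h1, h2, h3⟩ := hballmem r hr
      exact bound_gen (n+2) (ℓ-2) C₂ hC₂ _ _ k r hk0 h1 h2
        (hB₂ (k*r) (by positivity)) (hB' (k*r') (by positivity))
    have hdiff : ∀ᵐ k ∂(volume.restrict (Set.Ioi (0:ℝ))), ∀ r ∈ Metric.ball r₀ (r₀/2),
        HasDerivAt (fun r : ℝ => k^(n+1) * djf ℓ (k*r) * jf ℓ' (k*r'))
          (k^(n+2) * d2jf ℓ (k*r) * jf ℓ' (k*r')) r := by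
      rw [ae_restrict_iff' measurableSet_Ioi]
      apply Filter.Eventually.of_forall
      intro k hk r _
      have hk0 : (0:ℝ) < k := hk
      have h1 : HasDerivAt (fun r : ℝ => k*r) k r := by
        simpa using (hasDerivAt_id r).const_mul k
      have h2 : HasDerivAt (fun r : ℝ => djf ℓ (k*r)) (k * d2jf ℓ (k*r)) r := by
        exact hasDerivAt_of_eq' ((hasDerivAt_djf ℓ (k*r)).comp r h1) (mul_comm _ _)
      have h3 := (h2.const_mul (k^(n+1))).mul_const (jf ℓ' (k*r'))
      refine hasDerivAt_of_eq' h3 ?_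
      rw [show n+2 = (n+1)+1 by ring, zpow_add_one₀ (ne_of_gt hk0)]
      ring
    have eps : (0:ℝ) < r₀/2 := by linarith
    refine hasDerivAt_integral_of_dominated_loc_of_deriv_le (Metric.ball_mem_nhds r₀ eps) ?_ ?_ ?_ hbound ?_ hdiff
    · exact Filter.Eventually.of_forall fun r =>
        aesm_integrand (n+1) (djf ℓ) (cont_djf ℓ) (jf ℓ') (cont_jf ℓ') r r'
    · exact step1.1
    · exact aesm_integrand (n+2) (d2jf ℓ) (cont_d2jf ℓ) (jf ℓ') (cont_jf ℓ') r₀ r'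
    · exact ψ_int (n+2) (ℓ-2) C₂ (by omega) (by push_cast; linarith)
  exact ⟨int0, step1.1, step2.1, step1.2, step2.2⟩

set_option maxHeartbeats 1000000 in
/-- For `n ≤ −2` with `ℓ + ℓ' + n + 1 > 0` and fixed `r' > 0`, the overlap integral
`I(r) = ∫₀^∞ k^n j_ℓ(kr) j_{ℓ'}(kr') dk` is twice differentiable on `(0,∞)` and applying
`D̂_{ℓ,r} = −[∂²/∂r² + (2/r)∂/∂r − ℓ(ℓ+1)/r²]` raises the power-law weight by two. -/
theorem doubleSBF_operator_raises_power (ℓ ℓ' : ℕ) (n : ℤ) (hn : n ≤ -2)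
    (hconv : 0 < (ℓ : ℤ) + ℓ' + n + 1) (r' : ℝ) (hr' : 0 < r') :
    (∀ r : ℝ, 0 < r →
        DifferentiableAt ℝ
          (fun r : ℝ => ∫ k in Set.Ioi (0 : ℝ),
            k ^ n * sphericalBessel ℓ (k * r) * sphericalBessel ℓ' (k * r')) r ∧
        DifferentiableAt ℝ
          (deriv (fun r : ℝ => ∫ k in Set.Ioi (0 : ℝ),
            k ^ n * sphericalBessel ℓ (k * r) * sphericalBessel ℓ' (k * r'))) r) ∧
      ∀ r : ℝ, 0 < r →
        -(deriv (deriv (fun r : ℝ => ∫ k in Set.Ioi (0 : ℝ),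
              k ^ n * sphericalBessel ℓ (k * r) * sphericalBessel ℓ' (k * r'))) r
            + (2 / r) * deriv (fun r : ℝ => ∫ k in Set.Ioi (0 : ℝ),
              k ^ n * sphericalBessel ℓ (k * r) * sphericalBessel ℓ' (k * r')) r
            - ((ℓ : ℝ) * ((ℓ : ℝ) + 1) / r ^ 2) * ∫ k in Set.Ioi (0 : ℝ),
              k ^ n * sphericalBessel ℓ (k * r) * sphericalBessel ℓ' (k * r'))
          = ∫ k in Set.Ioi (0 : ℝ),
              k ^ (n + 2) * sphericalBessel ℓ (k * r) * sphericalBessel ℓ' (k * r') := by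
  have hc := fun (r : ℝ) (hr : 0 < r) => main_step ℓ ℓ' n hn hconv r' hr' r hr
  have hSJ : ∀ (p : ℤ) (r : ℝ), 0 < r →
      (∫ k in Set.Ioi (0:ℝ), k^p * sphericalBessel ℓ (k*r) * sphericalBessel ℓ' (k*r'))
        = ∫ k in Set.Ioi (0:ℝ), k^p * jf ℓ (k*r) * jf ℓ' (k*r') := by
    intro p r hr
    apply setIntegral_congr_fun measurableSet_Ioi
    intro k hk
    have hk0 : (0:ℝ) < k := hk
    simp only
    rw [sb_eq_jf ℓ (k*r) (by positivity), sb_eq_jf ℓ' (k*r') (by positivity)]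
  have hev : ∀ r : ℝ, 0 < r →
      (fun r : ℝ => ∫ k in Set.Ioi (0:ℝ),
          k^n * sphericalBessel ℓ (k*r) * sphericalBessel ℓ' (k*r'))
        =ᶠ[nhds r] (fun r : ℝ => ∫ k in Set.Ioi (0:ℝ), k^n * jf ℓ (k*r) * jf ℓ' (k*r')) := by
    intro r hr
    filter_upwards [Ioi_mem_nhds hr] with y hy
    exact hSJ n y hy
  have hd1 : ∀ r : ℝ, 0 < r →
      HasDerivAt (fun r : ℝ => ∫ k in Set.Ioi (0:ℝ),
          k^n * sphericalBessel ℓ (k*r) * sphericalBessel ℓ' (k*r'))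
        (∫ k in Set.Ioi (0:ℝ), k^(n+1) * djf ℓ (k*r) * jf ℓ' (k*r')) r := by
    intro r hr
    exact ((hc r hr).2.2.2.1).congr_of_eventuallyEq (hev r hr)
  have hder1 : ∀ r : ℝ, 0 < r →
      deriv (fun r : ℝ => ∫ k in Set.Ioi (0:ℝ),
          k^n * sphericalBessel ℓ (k*r) * sphericalBessel ℓ' (k*r')) r
        = ∫ k in Set.Ioi (0:ℝ), k^(n+1) * djf ℓ (k*r) * jf ℓ' (k*r') :=
    fun r hr => (hd1 r hr).deriv
  have hd2 : ∀ r : ℝ, 0 < r →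
      HasDerivAt (deriv (fun r : ℝ => ∫ k in Set.Ioi (0:ℝ),
          k^n * sphericalBessel ℓ (k*r) * sphericalBessel ℓ' (k*r')))
        (∫ k in Set.Ioi (0:ℝ), k^(n+2) * d2jf ℓ (k*r) * jf ℓ' (k*r')) r := by
    intro r hr
    refine ((hc r hr).2.2.2.2).congr_of_eventuallyEq ?_
    filter_upwards [Ioi_mem_nhds hr] with y hy
    exact hder1 y hy
  constructor
  · exact fun r hr => ⟨(hd1 r hr).differentiableAt, (hd2 r hr).differentiableAt⟩
  · intro r hr
    obtain ⟨i0, i1, i2, _, _⟩ := hc r hr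
    rw [(hd2 r hr).deriv, hder1 r hr, hSJ n r hr, hSJ (n+2) r hr]
    have comb : (∫ k in Set.Ioi (0:ℝ), k^(n+2) * d2jf ℓ (k*r) * jf ℓ' (k*r'))
        + (2/r) * (∫ k in Set.Ioi (0:ℝ), k^(n+1) * djf ℓ (k*r) * jf ℓ' (k*r'))
        - ((ℓ:ℝ)*((ℓ:ℝ)+1)/r^2) * (∫ k in Set.Ioi (0:ℝ), k^n * jf ℓ (k*r) * jf ℓ' (k*r'))
        = ∫ k in Set.Ioi (0:ℝ), (k^(n+2) * d2jf ℓ (k*r) * jf ℓ' (k*r')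
            + (2/r) * (k^(n+1) * djf ℓ (k*r) * jf ℓ' (k*r'))
            - ((ℓ:ℝ)*((ℓ:ℝ)+1)/r^2) * (k^n * jf ℓ (k*r) * jf ℓ' (k*r'))) := by
      have i21 : IntegrableOn (fun k : ℝ => k^(n+2) * d2jf ℓ (k*r) * jf ℓ' (k*r')
          + (2/r) * (k^(n+1) * djf ℓ (k*r) * jf ℓ' (k*r'))) (Set.Ioi 0) :=
        i2.add (i1.const_mul _)
      rw [← MeasureTheory.integral_const_mul, ← MeasureTheory.integral_const_mul,
        ← MeasureTheory.integral_add i2 (i1.const_mul _),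
        ← MeasureTheory.integral_sub i21 (i0.const_mul _)]
    rw [comb, ← MeasureTheory.integral_neg]
    apply setIntegral_congr_fun measurableSet_Ioi
    intro k hk
    have hk0 : (0:ℝ) < k := hk
    have hx : (0:ℝ) < k*r := by positivity
    have hkne : k ≠ 0 := ne_of_gt hk0
    have hrne : r ≠ 0 := ne_of_gt hr
    simp only
    calc -(k^(n+2) * d2jf ℓ (k*r) * jf ℓ' (k*r')
          + 2/r * (k^(n+1) * djf ℓ (k*r) * jf ℓ' (k*r'))
          - (ℓ:ℝ)*((ℓ:ℝ)+1)/r^2 * (k^n * jf ℓ (k*r) * jf ℓ' (k*r')))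
        = k^(n+2) * (-(d2jf ℓ (k*r) + (2/(k*r)) * djf ℓ (k*r)
            - ((ℓ:ℝ)*((ℓ:ℝ)+1)/(k*r)^2) * jf ℓ (k*r))) * jf ℓ' (k*r') := by
          rw [show n+2 = n+1+1 by ring, zpow_add_one₀ hkne, zpow_add_one₀ hkne]
          field_simp
      _ = k^(n+2) * jf ℓ (k*r) * jf ℓ' (k*r') := by rw [ode_jf ℓ (k*r) hx]
end

section
/- Let r₁, r₂, u > 0 with u ≠ r₁ + r₂ and u ≠ |r₁ − r₂|. Then the improper integral lim_{K→∞} ∫₀^K k² j₀(kr₁) j₀(kr₂) j₀(ku) dk exists, and it equals π/(4 r₁ r₂ u) if |r₁ − r₂| < u < r₁ + r₂, and equals 0 if u > r₁ + r₂ or u < |r₁ − r₂|. In other words, the triple spherical-Bessel integral ∫₀^∞ k² j₀(kr₁) j₀(kr₂) j₀(ku) dk equals (π/(4 r₁ r₂ u))·β(Δ) with Δ = (r₁² + r₂² − u²)/(2 r₁ r₂), vanishing unless r₁, r₂, u form a (nondegenerate) triangle. -/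
open Real

section TripleJ0Aux

open MeasureTheory Filter Set intervalIntegral Topology

private lemma tj0_hasDeriv_aux (t x : ℝ) :
    HasDerivAt (fun y => -(Real.exp (-(t*y)) * (t * Real.sin y + Real.cos y)) / (1 + t^2))
      (Real.exp (-(t*x)) * Real.sin x) x := by
  have h1 : HasDerivAt (fun y : ℝ => -(t*y)) (-t) x := by
    simpa using ((hasDerivAt_id x).const_mul t).fun_neg
  have h2 := h1.exp
  have h3 : HasDerivAt (fun y => t * Real.sin y + Real.cos y)
      (t * Real.cos x - Real.sin x) x := by
    simpa [sub_eq_add_neg] using ((Real.hasDerivAt_sin x).const_mul t).fun_add (Real.hasDerivAt_cos x)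
  have h4 := ((h2.fun_mul h3).fun_neg).div_const (1 + t^2)
  refine h4.congr_deriv ?_
  have ht : 1 + t^2 ≠ 0 := by positivity
  field_simp
  ring

private lemma tj0_integral_exp_mul_sin (t K : ℝ) :
    ∫ x in (0:ℝ)..K, Real.exp (-(t*x)) * Real.sin x
      = (1 - Real.exp (-(t*K)) * (t * Real.sin K + Real.cos K)) / (1 + t^2) := by
  rw [intervalIntegral.integral_eq_sub_of_hasDerivAt (fun x _ => tj0_hasDeriv_aux t x)
    ((Continuous.mul (by continuity) (by continuity)).intervalIntegrable _ _)]
  simp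
  ring

private lemma tj0_integral_exp_neg_mul_Ioi {b : ℝ} (hb : 0 < b) :
    ∫ t in Ioi (0:ℝ), Real.exp (-(b*t)) = 1/b := by
  have hd : ∀ x ∈ Ici (0:ℝ), HasDerivAt (fun y => -Real.exp (-(b*y))/b) (Real.exp (-(b*x))) x := by
    intro x _
    have h1 : HasDerivAt (fun y : ℝ => -(b*y)) (-b) x := by
      simpa using ((hasDerivAt_id x).const_mul b).fun_neg
    have := (h1.exp.fun_neg).div_const b
    refine this.congr_deriv ?_
    field_simp
  have hint : IntegrableOn (fun t => Real.exp (-(b*t))) (Ioi (0:ℝ)) := by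
    simpa [neg_mul] using exp_neg_integrableOn_Ioi 0 hb
  have h0 : Tendsto (fun y : ℝ => Real.exp (-(b*y))) atTop (𝓝 0) := by
    have hb' : Tendsto (fun y : ℝ => -(b*y)) atTop atBot := by
      exact tendsto_neg_atTop_atBot.comp (tendsto_id.const_mul_atTop hb)
    exact Real.tendsto_exp_atBot.comp hb'
  have htend : Tendsto (fun y => -Real.exp (-(b*y))/b) atTop (𝓝 0) := by
    simpa using (h0.neg).div_const b
  rw [integral_Ioi_of_hasDerivAt_of_tendsto' hd hint htend]
  simp [hb.ne']
  ring

private lemma tj0_sine_integral_repr {K : ℝ} (hK : 0 < K) :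
    ∫ x in (0:ℝ)..K, Real.sin x / x
      = ∫ t in Ioi (0:ℝ), (1 - Real.exp (-(t*K)) * (t * Real.sin K + Real.cos K)) / (1 + t^2) := by
  have meas : AEStronglyMeasurable (Function.uncurry fun x t => Real.sin x * Real.exp (-(x*t)))
      ((volume.restrict (Ioc (0:ℝ) K)).prod (volume.restrict (Ioi (0:ℝ)))) := by
    apply Continuous.aestronglyMeasurable
    fun_prop
  have h1 : ∀ᵐ x ∂(volume.restrict (Ioc (0:ℝ) K)),
      Integrable (fun t => Real.sin x * Real.exp (-(x*t))) (volume.restrict (Ioi (0:ℝ))) := by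
    rw [ae_restrict_iff' measurableSet_Ioc]
    filter_upwards with x hx
    have hx0 : 0 < x := hx.1
    have h2 : IntegrableOn (fun t => Real.exp (-(x*t))) (Ioi (0:ℝ)) := by
      simpa [neg_mul] using exp_neg_integrableOn_Ioi 0 hx0
    exact h2.const_mul _
  have h2 : Integrable
      (fun x => ∫ t, ‖Real.sin x * Real.exp (-(x*t))‖ ∂(volume.restrict (Ioi (0:ℝ))))
      (volume.restrict (Ioc (0:ℝ) K)) := by
    have hmeas2 : AEStronglyMeasurable
        (fun x => ∫ t in Ioi (0:ℝ), ‖Real.sin x * Real.exp (-(x*t))‖)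
        (volume.restrict (Ioc (0:ℝ) K)) := meas.norm.integral_prod_right'
    apply Integrable.mono' (integrable_const (1:ℝ)) hmeas2
    rw [ae_restrict_iff' measurableSet_Ioc]
    filter_upwards with x hx
    have hx0 : 0 < x := hx.1
    have hcalc : ∫ t in Ioi (0:ℝ), ‖Real.sin x * Real.exp (-(x*t))‖
        = |Real.sin x| * (1/x) := by
      simp_rw [norm_mul, Real.norm_eq_abs, Real.abs_exp]
      rw [MeasureTheory.integral_const_mul, tj0_integral_exp_neg_mul_Ioi hx0]
    rw [Real.norm_eq_abs, hcalc, abs_of_nonneg (by positivity), mul_one_div, div_le_one hx0]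
    calc |Real.sin x| ≤ |x| := Real.abs_sin_le_abs
      _ = x := abs_of_pos hx0
  have hInt : Integrable (Function.uncurry fun x t => Real.sin x * Real.exp (-(x*t)))
      ((volume.restrict (Ioc (0:ℝ) K)).prod (volume.restrict (Ioi (0:ℝ)))) :=
    (integrable_prod_iff meas).2 ⟨h1, h2⟩
  calc ∫ x in (0:ℝ)..K, Real.sin x / x
      = ∫ x in Ioc (0:ℝ) K, Real.sin x / x := intervalIntegral.integral_of_le hK.le
    _ = ∫ x in Ioc (0:ℝ) K, ∫ t in Ioi (0:ℝ), Real.sin x * Real.exp (-(x*t)) := by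
        apply setIntegral_congr_fun measurableSet_Ioc
        intro x hx
        have hx0 : 0 < x := hx.1
        dsimp only
        rw [MeasureTheory.integral_const_mul, tj0_integral_exp_neg_mul_Ioi hx0, mul_one_div]
    _ = ∫ t in Ioi (0:ℝ), ∫ x in Ioc (0:ℝ) K, Real.sin x * Real.exp (-(x*t)) :=
        integral_integral_swap hInt
    _ = ∫ t in Ioi (0:ℝ), (1 - Real.exp (-(t*K)) * (t * Real.sin K + Real.cos K)) / (1 + t^2) := by
        apply setIntegral_congr_fun measurableSet_Ioi
        intro t _
        dsimp only
        rw [← tj0_integral_exp_mul_sin t K, intervalIntegral.integral_of_le hK.le]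
        apply setIntegral_congr_fun measurableSet_Ioc
        intro x _
        simp [mul_comm]

private lemma tj0_err_bound (t K : ℝ) (ht : 0 ≤ t) :
    ‖Real.exp (-(t*K)) * (t * Real.sin K + Real.cos K) / (1 + t^2)‖ ≤ 2 * Real.exp (-(K*t)) := by
  rw [norm_div, norm_mul, Real.norm_eq_abs, Real.norm_eq_abs, Real.abs_exp]
  rw [Real.norm_eq_abs, abs_of_pos (by positivity : (0:ℝ) < 1 + t^2)]
  rw [div_le_iff₀ (by positivity), mul_comm t K]
  have h1 : |t * Real.sin K + Real.cos K| ≤ t + 1 := by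
    calc |t * Real.sin K + Real.cos K| ≤ |t * Real.sin K| + |Real.cos K| := abs_add_le _ _
      _ ≤ t * 1 + 1 := by
          gcongr
          · rw [abs_mul, abs_of_nonneg ht]
            gcongr
            · exact Real.abs_sin_le_one K
          · exact Real.abs_cos_le_one K
      _ = t + 1 := by ring
  calc Real.exp (-(K*t)) * |t * Real.sin K + Real.cos K| ≤ Real.exp (-(K*t)) * (t+1) := by
        gcongr
    _ ≤ 2 * Real.exp (-(K*t)) * (1 + t^2) := by
        nlinarith [sq_nonneg (t-1), sq_nonneg t, Real.exp_pos (-(K*t))]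

private lemma tj0_err_integrable {K : ℝ} (hK : 0 < K) :
    IntegrableOn (fun t => Real.exp (-(t*K)) * (t * Real.sin K + Real.cos K) / (1 + t^2))
      (Ioi (0:ℝ)) := by
  have hb : IntegrableOn (fun t => 2 * Real.exp (-(K*t))) (Ioi (0:ℝ)) := by
    apply Integrable.const_mul
    simpa [neg_mul, IntegrableOn] using exp_neg_integrableOn_Ioi 0 hK
  apply Integrable.mono' hb
  · apply Continuous.aestronglyMeasurable
    have h0 : ∀ t : ℝ, (1:ℝ) + t^2 ≠ 0 := fun t => by positivity
    exact ((Real.continuous_exp.comp (by fun_prop)).mul (by fun_prop)).div (by fun_prop) h0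
  · rw [ae_restrict_iff' measurableSet_Ioi]
    filter_upwards with t ht
    exact tj0_err_bound t K (le_of_lt ht)

private lemma tj0_dirichlet :
    Tendsto (fun K => ∫ x in (0:ℝ)..K, Real.sin x / x) atTop (𝓝 (π/2)) := by
  have herr : Tendsto
      (fun K => ∫ t in Ioi (0:ℝ), Real.exp (-(t*K)) * (t * Real.sin K + Real.cos K) / (1 + t^2))
      atTop (𝓝 0) := by
    apply squeeze_zero_norm' (a := fun K : ℝ => 2 / K)
    · filter_upwards [eventually_gt_atTop (0:ℝ)] with K hK
      calc ‖∫ t in Ioi (0:ℝ), Real.exp (-(t*K)) * (t * Real.sin K + Real.cos K) / (1 + t^2)‖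
          ≤ ∫ t in Ioi (0:ℝ), 2 * Real.exp (-(K*t)) := by
            apply MeasureTheory.norm_integral_le_of_norm_le
            · apply Integrable.const_mul
              simpa [neg_mul, IntegrableOn] using exp_neg_integrableOn_Ioi 0 hK
            · rw [ae_restrict_iff' measurableSet_Ioi]
              filter_upwards with t ht
              exact tj0_err_bound t K (le_of_lt ht)
        _ = 2 / K := by
            rw [MeasureTheory.integral_const_mul, tj0_integral_exp_neg_mul_Ioi hK]
            ring
    · have : Tendsto (fun K : ℝ => K⁻¹) atTop (𝓝 0) := tendsto_inv_atTop_zero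
      simpa [div_eq_mul_inv] using this.const_mul 2
  have hmain : ∀ᶠ K in atTop, (∫ x in (0:ℝ)..K, Real.sin x / x)
      = π/2 - ∫ t in Ioi (0:ℝ), Real.exp (-(t*K)) * (t * Real.sin K + Real.cos K) / (1 + t^2) := by
    filter_upwards [eventually_gt_atTop (0:ℝ)] with K hK
    rw [tj0_sine_integral_repr hK]
    have hsplit : ∀ t : ℝ, (1 - Real.exp (-(t*K)) * (t * Real.sin K + Real.cos K)) / (1 + t^2)
        = (1 + t^2)⁻¹ - Real.exp (-(t*K)) * (t * Real.sin K + Real.cos K) / (1 + t^2) := by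
      intro t; field_simp
    simp_rw [hsplit]
    rw [MeasureTheory.integral_sub (integrable_inv_one_add_sq.integrableOn)
      (tj0_err_integrable hK)]
    rw [integral_Ioi_inv_one_add_sq]
    simp
  rw [show (π/2) = π/2 - 0 by ring]
  exact Tendsto.congr' (hmain.mono fun K h => h.symm) ((tendsto_const_nhds).sub herr)

private lemma tj0_intervalIntegrable (a K : ℝ) :
    IntervalIntegrable (fun k => Real.sin (k*a) / k) volume 0 K := by
  rw [intervalIntegrable_iff]
  haveI : IsFiniteMeasure (volume.restrict (Set.uIoc (0:ℝ) K)) := by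
    constructor
    rw [Measure.restrict_apply_univ]
    exact measure_Ioc_lt_top
  apply Integrable.mono' (integrable_const |a|)
  · apply Measurable.aestronglyMeasurable
    exact (Real.measurable_sin.comp (measurable_id.mul_const a)).div measurable_id
  · filter_upwards with k
    rcases eq_or_ne k 0 with rfl | hk
    · simp
    · rw [Real.norm_eq_abs, abs_div]
      rw [div_le_iff₀ (abs_pos.2 hk)]
      calc |Real.sin (k*a)| ≤ |k*a| := Real.abs_sin_le_abs
        _ = |a| * |k| := by rw [abs_mul]; ring

private lemma tj0_tendsto_pos {a : ℝ} (ha : 0 < a) :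
    Tendsto (fun K => ∫ k in (0:ℝ)..K, Real.sin (k*a) / k) atTop (𝓝 (π/2)) := by
  have key : ∀ K : ℝ, (∫ k in (0:ℝ)..K, Real.sin (k*a) / k)
      = ∫ u in (0:ℝ)..(K*a), Real.sin u / u := by
    intro K
    have h1 : (fun k => Real.sin (k*a) / k) = fun k => a * ((fun u => Real.sin u / u) (k*a)) := by
      funext k
      rcases eq_or_ne k 0 with rfl | hk
      · simp
      · field_simp
    rw [h1, intervalIntegral.integral_const_mul,
      intervalIntegral.integral_comp_mul_right (fun u => Real.sin u / u) ha.ne']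
    rw [zero_mul, smul_eq_mul, ← mul_assoc, mul_inv_cancel₀ ha.ne', one_mul]
  simp_rw [key]
  exact tj0_dirichlet.comp (tendsto_atTop_mono' atTop (by filter_upwards with x using le_rfl)
    (tendsto_id.atTop_mul_const ha))

private lemma tj0_tendsto_neg {a : ℝ} (ha : a < 0) :
    Tendsto (fun K => ∫ k in (0:ℝ)..K, Real.sin (k*a) / k) atTop (𝓝 (-(π/2))) := by
  have h1 : ∀ K : ℝ, (∫ k in (0:ℝ)..K, Real.sin (k*a) / k)
      = - ∫ k in (0:ℝ)..K, Real.sin (k*(-a)) / k := by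
    intro K
    rw [← intervalIntegral.integral_neg]
    apply intervalIntegral.integral_congr
    intro k _
    simp [neg_div]
  simp_rw [h1]
  exact (tj0_tendsto_pos (by linarith)).neg

private lemma tj0_sin_triple (A B C : ℝ) : Real.sin A * Real.sin B * Real.sin C
    = (Real.sin (A+B-C) + Real.sin (A-B+C) + Real.sin (-A+B+C) - Real.sin (A+B+C))/4 := by
  simp [Real.sin_add, Real.sin_sub, Real.cos_add, Real.cos_sub, Real.sin_neg, Real.cos_neg]
  ring

private lemma tj0_integrand_eq (r₁ r₂ u : ℝ) (h₁ : 0 < r₁) (h₂ : 0 < r₂) (hu : 0 < u) (k : ℝ) :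
    k ^ 2 * (Real.sin (k * r₁) / (k * r₁)) * (Real.sin (k * r₂) / (k * r₂))
          * (Real.sin (k * u) / (k * u))
    = (1/(4*r₁*r₂*u)) * (Real.sin (k*(r₁+r₂-u)) / k + Real.sin (k*(r₁-r₂+u)) / k
        + Real.sin (k*(-r₁+r₂+u)) / k - Real.sin (k*(r₁+r₂+u)) / k) := by
  rcases eq_or_ne k 0 with rfl | hk
  · simp
  · have key := tj0_sin_triple (k*r₁) (k*r₂) (k*u)
    have e1 : k*r₁ + k*r₂ - k*u = k*(r₁+r₂-u) := by ring
    have e2 : k*r₁ - k*r₂ + k*u = k*(r₁-r₂+u) := by ring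
    have e3 : -(k*r₁) + k*r₂ + k*u = k*(-r₁+r₂+u) := by ring
    have e4 : k*r₁ + k*r₂ + k*u = k*(r₁+r₂+u) := by ring
    rw [e1, e2, e3, e4] at key
    field_simp
    linear_combination 4 * key

end TripleJ0Aux

open MeasureTheory Filter Set intervalIntegral Topology in
/-- The triple spherical-Bessel integral `∫₀^∞ k² j₀(kr₁) j₀(kr₂) j₀(ku) dk`, understood as
the improper limit `K → ∞` of proper integrals over `[0,K]`, exists away from the
degenerate configurations and equals `π/(4 r₁ r₂ u)` if `|r₁ − r₂| < u < r₁ + r₂`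
and `0` otherwise; here `j₀(x) = sin x / x`. -/
theorem triple_j0_integral (r₁ r₂ u : ℝ) (h₁ : 0 < r₁) (h₂ : 0 < r₂) (hu : 0 < u)
    (hne₁ : u ≠ r₁ + r₂) (hne₂ : u ≠ |r₁ - r₂|) :
    Filter.Tendsto
      (fun K : ℝ => ∫ k in (0 : ℝ)..K,
        k ^ 2 * (Real.sin (k * r₁) / (k * r₁)) * (Real.sin (k * r₂) / (k * r₂))
          * (Real.sin (k * u) / (k * u)))
      Filter.atTop
      (nhds (if |r₁ - r₂| < u ∧ u < r₁ + r₂ then Real.pi / (4 * r₁ * r₂ * u) else 0)) := by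
  classical
  set a := r₁ + r₂ - u with ha_def
  set b := r₁ - r₂ + u with hb_def
  set e := -r₁ + r₂ + u with he_def
  set d := r₁ + r₂ + u with hd_def
  have hd : 0 < d := by simp only [hd_def]; linarith
  have hfeq : ∀ K : ℝ,
      (∫ k in (0 : ℝ)..K,
        k ^ 2 * (Real.sin (k * r₁) / (k * r₁)) * (Real.sin (k * r₂) / (k * r₂))
          * (Real.sin (k * u) / (k * u)))
      = (1/(4*r₁*r₂*u)) * ((∫ k in (0:ℝ)..K, Real.sin (k*a) / k)
          + (∫ k in (0:ℝ)..K, Real.sin (k*b) / k)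
          + (∫ k in (0:ℝ)..K, Real.sin (k*e) / k)
          - (∫ k in (0:ℝ)..K, Real.sin (k*d) / k)) := by
    intro K
    have step1 :
        (∫ k in (0 : ℝ)..K,
          k ^ 2 * (Real.sin (k * r₁) / (k * r₁)) * (Real.sin (k * r₂) / (k * r₂))
            * (Real.sin (k * u) / (k * u)))
        = ∫ k in (0:ℝ)..K, (1/(4*r₁*r₂*u)) * (Real.sin (k*a) / k + Real.sin (k*b) / k
            + Real.sin (k*e) / k - Real.sin (k*d) / k) :=
      intervalIntegral.integral_congr (fun k _ => tj0_integrand_eq r₁ r₂ u h₁ h₂ hu k)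
    rw [step1, intervalIntegral.integral_const_mul,
      intervalIntegral.integral_sub
        (((tj0_intervalIntegrable a K).add (tj0_intervalIntegrable b K)).add
          (tj0_intervalIntegrable e K)) (tj0_intervalIntegrable d K),
      intervalIntegral.integral_add ((tj0_intervalIntegrable a K).add
        (tj0_intervalIntegrable b K)) (tj0_intervalIntegrable e K),
      intervalIntegral.integral_add (tj0_intervalIntegrable a K) (tj0_intervalIntegrable b K)]
  have hSd : Tendsto (fun K => ∫ k in (0:ℝ)..K, Real.sin (k*d) / k) atTop (𝓝 (π/2)) :=
    tj0_tendsto_pos hd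
  have habs : |r₁ - r₂| ≤ r₁ + r₂ := by
    rw [abs_le]; constructor <;> linarith
  have combine : ∀ (La Lb Le : ℝ),
      Tendsto (fun K => ∫ k in (0:ℝ)..K, Real.sin (k*a) / k) atTop (𝓝 La) →
      Tendsto (fun K => ∫ k in (0:ℝ)..K, Real.sin (k*b) / k) atTop (𝓝 Lb) →
      Tendsto (fun K => ∫ k in (0:ℝ)..K, Real.sin (k*e) / k) atTop (𝓝 Le) →
      Tendsto
        (fun K : ℝ => ∫ k in (0 : ℝ)..K,
          k ^ 2 * (Real.sin (k * r₁) / (k * r₁)) * (Real.sin (k * r₂) / (k * r₂))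
            * (Real.sin (k * u) / (k * u)))
        atTop (𝓝 ((1/(4*r₁*r₂*u)) * (La + Lb + Le - π/2))) := by
    intro La Lb Le hA hB hE
    exact ((((hA.add hB).add hE).sub hSd).const_mul _).congr fun K => (hfeq K).symm
  rcases lt_or_gt_of_ne hne₂ with hlt | hgt
  · -- u < |r₁ - r₂| : value 0
    rw [if_neg (fun h => absurd h.1 (by linarith))]
    have hA : 0 < a := by simp only [ha_def]; linarith [lt_of_lt_of_le hlt habs]
    rcases lt_abs.mp hlt with h' | h'
    · -- u < r₁ - r₂ : b > 0, e < 0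
      have hB : 0 < b := by simp only [hb_def]; linarith
      have hE : e < 0 := by simp only [he_def]; linarith
      have := combine _ _ _ (tj0_tendsto_pos hA) (tj0_tendsto_pos hB) (tj0_tendsto_neg hE)
      have hval : (1/(4*r₁*r₂*u)) * (π/2 + π/2 + -(π/2) - π/2) = 0 := by ring
      rwa [hval] at this
    · -- u < r₂ - r₁ : b < 0, e > 0
      have hB : b < 0 := by simp only [hb_def]; linarith
      have hE : 0 < e := by simp only [he_def]; linarith
      have := combine _ _ _ (tj0_tendsto_pos hA) (tj0_tendsto_neg hB) (tj0_tendsto_pos hE)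
      have hval : (1/(4*r₁*r₂*u)) * (π/2 + -(π/2) + π/2 - π/2) = 0 := by ring
      rwa [hval] at this
  · -- |r₁ - r₂| < u : b > 0, e > 0
    have hab : -(r₁ - r₂) < u ∧ r₁ - r₂ < u := by
      have := abs_lt.mp hgt
      exact ⟨by linarith [this.1], this.2⟩
    have hB : 0 < b := by simp only [hb_def]; linarith [hab.1]
    have hE : 0 < e := by simp only [he_def]; linarith [hab.2]
    rcases lt_or_gt_of_ne hne₁ with h' | h'
    · -- u < r₁ + r₂ : a > 0, value π/(4 r₁ r₂ u)
      rw [if_pos ⟨hgt, h'⟩]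
      have hA : 0 < a := by simp only [ha_def]; linarith
      have := combine _ _ _ (tj0_tendsto_pos hA) (tj0_tendsto_pos hB) (tj0_tendsto_pos hE)
      have hval : (1/(4*r₁*r₂*u)) * (π/2 + π/2 + π/2 - π/2) = π / (4 * r₁ * r₂ * u) := by
        ring
      rwa [hval] at this
    · -- u > r₁ + r₂ : a < 0, value 0
      rw [if_neg (fun h => absurd h.2 (by linarith))]
      have hA : a < 0 := by simp only [ha_def]; linarith
      have := combine _ _ _ (tj0_tendsto_neg hA) (tj0_tendsto_pos hB) (tj0_tendsto_pos hE)
      have hval : (1/(4*r₁*r₂*u)) * (-(π/2) + π/2 + π/2 - π/2) = 0 := by ring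
      rwa [hval] at this
end
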